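/- arXiv:2310.18618 — 7 statements merged into one kernel-verified Lean document; each statement's English description precedes it below -/
import Mathlib

section
/- Under the GSVD setup, for every λ > 0 the matrix (L_M A)ᵀ L_M A + λ L_Nᵀ L_N is invertible, and the Tikhonov regularized solution x_λ = [(L_M A)ᵀ L_M A + λ L_Nᵀ L_N]^{-1} (L_M A)ᵀ L_M b satisfies x_λ = Σ_{i=1}^{r} (γ_i²/(γ_i² + λ)) · ((u_{A,i}ᵀ L_M b)/σ_i) · z_i, where γ_i = σ_i. -/
open Matrix

lemma sum_restrict_castLE {r n : ℕ} (h : r ≤ n) (f : Fin n → ℝ)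
    (hf : ∀ j : Fin n, r ≤ (j : ℕ) → f j = 0) :
    ∑ j, f j = ∑ i : Fin r, f (Fin.castLE h i) := by
  rw [← Finset.sum_image (fun x _ y _ hxy => Fin.castLE_injective h hxy)]
  refine (Finset.sum_subset (Finset.subset_univ _) ?_).symm
  intro x _ hx
  refine hf x (le_of_not_gt fun hlt => hx ?_)
  exact Finset.mem_image.mpr ⟨⟨(x : ℕ), hlt⟩, Finset.mem_univ _, Fin.ext rfl⟩

/-- Under the GSVD setup, for every `λ > 0` the matrix
`(L_M A)ᵀ L_M A + λ L_Nᵀ L_N` is invertible and the Tikhonov solution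
`x_λ = [(L_M A)ᵀ L_M A + λ L_Nᵀ L_N]⁻¹ (L_M A)ᵀ L_M b` has the filtered GSVD expansion
`x_λ = Σ_{i=1}^r (γ_i²/(γ_i²+λ)) ((u_{A,i}ᵀ L_M b)/σ_i) z_i` with `γ_i = σ_i`. -/
theorem tikhonov_gsvd_expansion {m n : ℕ} (r : ℕ) (hrm : r ≤ m) (hrn : r ≤ n)
    (A : Matrix (Fin m) (Fin n) ℝ) (b : Fin m → ℝ)
    (M : Matrix (Fin m) (Fin m) ℝ) (N : Matrix (Fin n) (Fin n) ℝ)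
    (hM : M.PosDef) (hN : N.PosDef)
    (LM : Matrix (Fin m) (Fin m) ℝ) (LN : Matrix (Fin n) (Fin n) ℝ)
    (hLM : IsUnit LM.det) (hLN : IsUnit LN.det)
    (hLMM : LMᵀ * LM = M⁻¹) (hLNN : LNᵀ * LN = N⁻¹)
    (UA : Matrix (Fin m) (Fin m) ℝ) (hUA : UAᵀ * UA = 1)
    (Z : Matrix (Fin n) (Fin n) ℝ) (hZ : IsUnit Z.det) (hZN : Zᵀ * N⁻¹ * Z = 1)
    (σ : ℕ → ℝ)
    (hσpos : ∀ i, i < r → 0 < σ i) (hσlt1 : ∀ i, i < r → σ i < 1)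
    (hσord : ∀ i j, i ≤ j → j < r → σ j ≤ σ i)
    (SigA : Matrix (Fin m) (Fin n) ℝ)
    (hSigA : ∀ (i : Fin m) (j : Fin n),
      SigA i j = if (i : ℕ) = (j : ℕ) ∧ (i : ℕ) < r then σ (i : ℕ) else 0)
    (hgsvd : LM * A = UA * SigA * Z⁻¹) :
    ∀ lam : ℝ, 0 < lam →
      IsUnit ((LM * A)ᵀ * (LM * A) + lam • (LNᵀ * LN)) ∧
      (((LM * A)ᵀ * (LM * A) + lam • (LNᵀ * LN))⁻¹ * (LM * A)ᵀ) *ᵥ (LM *ᵥ b) =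
        ∑ i : Fin r,
          ((σ (i : ℕ) ^ 2 / (σ (i : ℕ) ^ 2 + lam)) *
            ((UAᵀ (Fin.castLE hrm i) ⬝ᵥ (LM *ᵥ b)) / σ (i : ℕ))) •
            Zᵀ (Fin.castLE hrn i) := by
  intro lam hlam
  have hZZ : Z⁻¹ * Z = 1 := Matrix.nonsing_inv_mul Z hZ
  have hZZ' : Z * Z⁻¹ = 1 := Matrix.mul_nonsing_inv Z hZ
  -- N⁻¹ = Z⁻¹ᵀ * Z⁻¹
  have hNinv : N⁻¹ = (Z⁻¹)ᵀ * (Z⁻¹) := by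
    have h1 : (Z⁻¹)ᵀ * (Zᵀ * N⁻¹ * Z) * Z⁻¹ = (Z⁻¹)ᵀ * Z⁻¹ := by
      rw [hZN, Matrix.mul_one]
    calc N⁻¹ = ((Z⁻¹)ᵀ * Zᵀ) * N⁻¹ * (Z * Z⁻¹) := by
                rw [← transpose_mul, hZZ', transpose_one, one_mul, mul_one]
      _ = (Z⁻¹)ᵀ * (Zᵀ * N⁻¹ * Z) * Z⁻¹ := by simp only [Matrix.mul_assoc]
      _ = (Z⁻¹)ᵀ * Z⁻¹ := h1
  -- diagonal structure
  set d : Fin n → ℝ := fun j => if (j : ℕ) < r then σ (j : ℕ) ^ 2 + lam else lam with hd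
  have hdpos : ∀ j, 0 < d j := by
    intro j; simp only [hd]
    by_cases hj : (j : ℕ) < r
    · rw [if_pos hj]; have := hσpos _ hj; positivity
    · rw [if_neg hj]; exact hlam
  have hdne : ∀ j, d j ≠ 0 := fun j => (hdpos j).ne'
  have hSS : SigAᵀ * SigA = diagonal (fun j : Fin n => if (j : ℕ) < r then σ (j : ℕ) ^ 2 else 0) := by
    ext j k
    rw [mul_apply]
    simp only [transpose_apply, hSigA, diagonal]
    by_cases hjr : (j : ℕ) < r
    · rw [Finset.sum_eq_single (⟨(j : ℕ), lt_of_lt_of_le hjr hrm⟩ : Fin m)]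
      · by_cases hjk : (j : ℕ) = (k : ℕ)
        · have : j = k := Fin.ext hjk
          subst this
          simp [hjr, sq]
        · have : ¬ j = k := fun h => hjk (congrArg _ h)
          simp [hjk, this, hjr]
      · intro i _ hi
        have : ¬ ((i : ℕ) = (j : ℕ) ∧ (i : ℕ) < r) := by
          rintro ⟨h1, _⟩; exact hi (Fin.ext h1)
        simp [this]
      · intro h; exact absurd (Finset.mem_univ _) h
    · rw [Finset.sum_eq_zero]
      · have : ¬ ((j : ℕ) = (k : ℕ) ∧ (j : ℕ) < r) := fun h => hjr h.2
        by_cases hjk : j = k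
        · subst hjk; simp [hjr]
        · simp [Matrix.of_apply, hjk]
      · intro i _
        by_cases h1 : (i : ℕ) = (j : ℕ)
        · have : ¬ ((i : ℕ) = (j : ℕ) ∧ (i : ℕ) < r) := by
            rintro ⟨h2, h3⟩; exact hjr (h1 ▸ h3)
          simp [this]
        · simp [h1]
  have hD : SigAᵀ * SigA + lam • (1 : Matrix (Fin n) (Fin n) ℝ) = diagonal d := by
    rw [hSS, ← Matrix.diagonal_one, ← Matrix.diagonal_smul, Matrix.diagonal_add]
    refine congrArg Matrix.diagonal ?_
    funext j
    simp only [hd, Pi.add_apply, Pi.smul_apply, smul_eq_mul, mul_one, Pi.one_apply]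
    by_cases hj : (j : ℕ) < r <;> simp [hj]
  -- the matrix T
  have hK : LM * A = UA * SigA * Z⁻¹ := hgsvd
  have hT : (LM * A)ᵀ * (LM * A) + lam • (LNᵀ * LN) = (Z⁻¹)ᵀ * diagonal d * Z⁻¹ := by
    rw [hK, hLNN, hNinv]
    have : (UA * SigA * Z⁻¹)ᵀ * (UA * SigA * Z⁻¹) = (Z⁻¹)ᵀ * (SigAᵀ * SigA) * Z⁻¹ := by
      calc (UA * SigA * Z⁻¹)ᵀ * (UA * SigA * Z⁻¹)
          = (Z⁻¹)ᵀ * (SigAᵀ * ((UAᵀ * UA) * SigA)) * Z⁻¹ := by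
            simp only [transpose_mul, Matrix.mul_assoc]
        _ = (Z⁻¹)ᵀ * (SigAᵀ * SigA) * Z⁻¹ := by rw [hUA, Matrix.one_mul]
    rw [this]
    have : lam • ((Z⁻¹)ᵀ * Z⁻¹) = (Z⁻¹)ᵀ * (lam • (1 : Matrix (Fin n) (Fin n) ℝ)) * Z⁻¹ := by
      rw [Matrix.mul_smul, Matrix.smul_mul, mul_one]
    rw [this, ← Matrix.add_mul, ← Matrix.mul_add, hD]
  set E : Matrix (Fin n) (Fin n) ℝ := diagonal (fun j => (d j)⁻¹) with hE
  have hDE : diagonal d * E = 1 := by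
    rw [hE, diagonal_mul_diagonal]
    convert Matrix.diagonal_one using 2
    funext j
    exact mul_inv_cancel₀ (hdne j)
  have hTinvEq : ((LM * A)ᵀ * (LM * A) + lam • (LNᵀ * LN)) * (Z * E * Zᵀ) = 1 := by
    rw [hT]
    calc (Z⁻¹)ᵀ * diagonal d * Z⁻¹ * (Z * E * Zᵀ)
        = (Z⁻¹)ᵀ * (diagonal d * ((Z⁻¹ * Z) * (E * Zᵀ))) := by simp only [Matrix.mul_assoc]
      _ = (Z⁻¹)ᵀ * (diagonal d * E) * Zᵀ := by rw [hZZ, Matrix.one_mul]; simp only [Matrix.mul_assoc]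
      _ = (Z⁻¹)ᵀ * Zᵀ := by rw [hDE, Matrix.mul_one]
      _ = 1 := by rw [← transpose_mul, hZZ', transpose_one]
  have hUnit : IsUnit ((LM * A)ᵀ * (LM * A) + lam • (LNᵀ * LN)) := by
    rw [Matrix.isUnit_iff_isUnit_det]
    have := congrArg Matrix.det hTinvEq
    rw [Matrix.det_mul, Matrix.det_one] at this
    exact IsUnit.of_mul_eq_one _ this
  refine ⟨hUnit, ?_⟩
  have hTinv : ((LM * A)ᵀ * (LM * A) + lam • (LNᵀ * LN))⁻¹ = Z * E * Zᵀ :=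
    Matrix.inv_eq_right_inv hTinvEq
  rw [hTinv, hK]
  have hmat : Z * E * Zᵀ * (UA * SigA * Z⁻¹)ᵀ = Z * (E * (SigAᵀ * UAᵀ)) := by
    calc Z * E * Zᵀ * (UA * SigA * Z⁻¹)ᵀ
        = Z * (E * ((Z⁻¹ * Z)ᵀ * (SigAᵀ * UAᵀ))) := by
          simp only [transpose_mul, transpose_transpose, Matrix.mul_assoc]
      _ = Z * (E * (SigAᵀ * UAᵀ)) := by rw [hZZ, transpose_one, Matrix.one_mul]
  rw [hmat]
  set v : Fin m → ℝ := LM *ᵥ b with hv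
  set u : Fin m → ℝ := UAᵀ *ᵥ v with hu
  have step1 : (Z * (E * (SigAᵀ * UAᵀ))) *ᵥ v = Z *ᵥ (E *ᵥ (SigAᵀ *ᵥ u)) := by
    simp only [hu, Matrix.mulVec_mulVec, Matrix.mul_assoc]
  rw [step1]
  -- compute inner vector
  have hinner : ∀ j : Fin n, (E *ᵥ (SigAᵀ *ᵥ u)) j =
      if h : (j : ℕ) < r then (σ (j : ℕ) / (σ (j : ℕ) ^ 2 + lam)) * u ⟨(j : ℕ), lt_of_lt_of_le h hrm⟩ else 0 := by
    intro j
    rw [hE, Matrix.mulVec_diagonal]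
    have hsig : (SigAᵀ *ᵥ u) j =
        if h : (j : ℕ) < r then σ (j : ℕ) * u ⟨(j : ℕ), lt_of_lt_of_le h hrm⟩ else 0 := by
      rw [Matrix.mulVec]
      simp only [dotProduct, transpose_apply, hSigA]
      by_cases hjr : (j : ℕ) < r
      · rw [Finset.sum_eq_single (⟨(j : ℕ), lt_of_lt_of_le hjr hrm⟩ : Fin m)]
        · simp [hjr]
        · intro i _ hi
          have : ¬ ((i : ℕ) = (j : ℕ) ∧ (i : ℕ) < r) := by
            rintro ⟨h1, _⟩; exact hi (Fin.ext h1)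
          simp [this]
        · intro h; exact absurd (Finset.mem_univ _) h
      · rw [Finset.sum_eq_zero, dif_neg hjr]
        intro i _
        by_cases h1 : (i : ℕ) = (j : ℕ)
        · have : ¬ ((i : ℕ) = (j : ℕ) ∧ (i : ℕ) < r) := by
            rintro ⟨h2, h3⟩; exact hjr (h1 ▸ h3)
          simp [this]
        · simp [h1]
    rw [hsig]
    by_cases hjr : (j : ℕ) < r
    · rw [dif_pos hjr, dif_pos hjr, hd]
      simp only [if_pos hjr]
      field_simp
    · rw [dif_neg hjr, dif_neg hjr, mul_zero]
  funext k
  rw [Finset.sum_apply]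
  have lhs_eq : (Z *ᵥ (E *ᵥ (SigAᵀ *ᵥ u))) k = ∑ j : Fin n, Z k j * (E *ᵥ (SigAᵀ *ᵥ u)) j := by
    simp [Matrix.mulVec, dotProduct]
  rw [lhs_eq]
  rw [sum_restrict_castLE hrn (fun j => Z k j * (E *ᵥ (SigAᵀ *ᵥ u)) j)
    (by intro j hj; simp only [hinner j, dif_neg (not_lt.mpr hj), mul_zero])]
  refine Finset.sum_congr rfl fun i _ => ?_
  simp only [hinner]
  have hir : ((Fin.castLE hrn i : Fin n) : ℕ) < r := by simpa using i.isLt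
  rw [dif_pos hir]
  have hcast : (⟨((Fin.castLE hrn i : Fin n) : ℕ), lt_of_lt_of_le hir hrm⟩ : Fin m) = Fin.castLE hrm i := by
    apply Fin.ext; simp
  rw [hcast]
  have hui : UAᵀ (Fin.castLE hrm i) ⬝ᵥ v = u (Fin.castLE hrm i) := by
    simp [hu, Matrix.mulVec, dotProduct]
  have hσne : σ ((Fin.castLE hrn i : Fin n) : ℕ) ≠ 0 := (hσpos _ hir).ne'
  simp only [Pi.smul_apply, smul_eq_mul, transpose_apply]
  rw [← hui] at *
  have : ((Fin.castLE hrn i : Fin n) : ℕ) = (i : ℕ) := by simp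
  rw [this] at hσne ⊢
  field_simp
end

section
/- Under the GSVD setup, for every integer i ≥ 0 it holds that (N Aᵀ M^{-1} A)^i N Aᵀ M^{-1} b = Z_r D_A^{2i+1} U_{A,r}ᵀ L_M b, where Z_r and U_{A,r} denote the matrices of the first r columns of Z and U_A respectively. Consequently, for every k ≥ 1, the Krylov subspace K_k(N Aᵀ M^{-1} A, N Aᵀ M^{-1} b) = span{(N Aᵀ M^{-1} A)^i N Aᵀ M^{-1} b : 0 ≤ i ≤ k−1} equals span{Z_r D_A^{2i+1} U_{A,r}ᵀ L_M b : 0 ≤ i ≤ k−1}. -/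
open Matrix

/-- Under the GSVD setup, `(N Aᵀ M⁻¹ A)^i N Aᵀ M⁻¹ b = Z_r D_A^{2i+1} U_{A,r}ᵀ L_M b`
for every `i ≥ 0`; consequently, for every `k ≥ 1` the Krylov subspace
`K_k(N Aᵀ M⁻¹ A, N Aᵀ M⁻¹ b)` equals `span{Z_r D_A^{2i+1} U_{A,r}ᵀ L_M b : 0 ≤ i ≤ k−1}`. -/
theorem krylov_subspace_gsvd_form {m n : ℕ} (r : ℕ) (hrm : r ≤ m) (hrn : r ≤ n)
    (A : Matrix (Fin m) (Fin n) ℝ) (b : Fin m → ℝ)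
    (M : Matrix (Fin m) (Fin m) ℝ) (N : Matrix (Fin n) (Fin n) ℝ)
    (hM : M.PosDef) (hN : N.PosDef)
    (LM : Matrix (Fin m) (Fin m) ℝ) (LN : Matrix (Fin n) (Fin n) ℝ)
    (hLM : IsUnit LM.det) (hLN : IsUnit LN.det)
    (hLMM : LMᵀ * LM = M⁻¹) (hLNN : LNᵀ * LN = N⁻¹)
    (UA : Matrix (Fin m) (Fin m) ℝ) (hUA : UAᵀ * UA = 1)
    (Z : Matrix (Fin n) (Fin n) ℝ) (hZ : IsUnit Z.det) (hZN : Zᵀ * N⁻¹ * Z = 1)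
    (σ : ℕ → ℝ)
    (hσpos : ∀ i, i < r → 0 < σ i) (hσlt1 : ∀ i, i < r → σ i < 1)
    (hσord : ∀ i j, i ≤ j → j < r → σ j ≤ σ i)
    (SigA : Matrix (Fin m) (Fin n) ℝ)
    (hSigA : ∀ (i : Fin m) (j : Fin n),
      SigA i j = if (i : ℕ) = (j : ℕ) ∧ (i : ℕ) < r then σ (i : ℕ) else 0)
    (hgsvd : LM * A = UA * SigA * Z⁻¹)
    (Zr : Matrix (Fin n) (Fin r) ℝ) (hZr : Zr = Z.submatrix id (Fin.castLE hrn))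
    (UAr : Matrix (Fin m) (Fin r) ℝ) (hUAr : UAr = UA.submatrix id (Fin.castLE hrm))
    (DA : Matrix (Fin r) (Fin r) ℝ)
    (hDA : DA = Matrix.diagonal fun i : Fin r => σ (i : ℕ)) :
    (∀ i : ℕ,
      ((N * Aᵀ * M⁻¹ * A) ^ i * (N * Aᵀ * M⁻¹)) *ᵥ b =
        (Zr * DA ^ (2 * i + 1) * UArᵀ * LM) *ᵥ b) ∧
    (∀ k : ℕ, 1 ≤ k →
      Submodule.span ℝ {w : Fin n → ℝ | ∃ i, i < k ∧
          w = ((N * Aᵀ * M⁻¹ * A) ^ i * (N * Aᵀ * M⁻¹)) *ᵥ b} =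
      Submodule.span ℝ {w : Fin n → ℝ | ∃ i, i < k ∧
          w = (Zr * DA ^ (2 * i + 1) * UArᵀ * LM) *ᵥ b}) := by

  classical
  -- basic invertibility facts
  have hZt : IsUnit Zᵀ.det := by rwa [Matrix.det_transpose]
  have hNu : IsUnit N.det := isUnit_iff_ne_zero.mpr hN.det_pos.ne'
  -- N * (Z⁻¹)ᵀ = Z
  have hZtinv : (Zᵀ)⁻¹ = N⁻¹ * Z := by
    apply Matrix.inv_eq_right_inv
    rw [← Matrix.mul_assoc]; exact hZN
  have hNZ : N * (Z⁻¹)ᵀ = Z := by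
    rw [Matrix.transpose_nonsing_inv, hZtinv, ← Matrix.mul_assoc,
      Matrix.mul_nonsing_inv N hNu, Matrix.one_mul]
  -- B = N Aᵀ M⁻¹ = Z ΣAᵀ UAᵀ LM
  have hB : N * Aᵀ * M⁻¹ = Z * SigAᵀ * UAᵀ * LM := by
    have h1 : Aᵀ * M⁻¹ = (Z⁻¹)ᵀ * (SigAᵀ * (UAᵀ * LM)) := by
      rw [← hLMM, ← Matrix.mul_assoc, ← Matrix.transpose_mul, hgsvd]
      simp [Matrix.transpose_mul, Matrix.mul_assoc]
    calc N * Aᵀ * M⁻¹ = N * (Aᵀ * M⁻¹) := by rw [Matrix.mul_assoc]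
      _ = (N * (Z⁻¹)ᵀ) * (SigAᵀ * (UAᵀ * LM)) := by rw [h1, Matrix.mul_assoc]
      _ = Z * SigAᵀ * UAᵀ * LM := by rw [hNZ]; simp [Matrix.mul_assoc]
  -- B A = Z S Z⁻¹ with S = ΣAᵀ ΣA
  have hBA : N * Aᵀ * M⁻¹ * A = Z * (SigAᵀ * SigA) * Z⁻¹ := by
    have : N * Aᵀ * M⁻¹ * A = Z * SigAᵀ * (UAᵀ * (LM * A)) := by
      rw [hB]; simp [Matrix.mul_assoc]
    rw [this, hgsvd]
    calc Z * SigAᵀ * (UAᵀ * (UA * SigA * Z⁻¹))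
        = Z * SigAᵀ * ((UAᵀ * UA) * (SigA * Z⁻¹)) := by simp [Matrix.mul_assoc]
      _ = Z * (SigAᵀ * SigA) * Z⁻¹ := by rw [hUA]; simp [Matrix.mul_assoc]
  have hpow : ∀ i : ℕ, (N * Aᵀ * M⁻¹ * A) ^ i = Z * (SigAᵀ * SigA) ^ i * Z⁻¹ := by
    intro i
    induction i with
    | zero => simp [Matrix.mul_nonsing_inv Z hZ]
    | succ i ih =>
        rw [pow_succ, pow_succ, ih, hBA]
        calc Z * (SigAᵀ * SigA) ^ i * Z⁻¹ * (Z * (SigAᵀ * SigA) * Z⁻¹)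
            = Z * (SigAᵀ * SigA) ^ i * (Z⁻¹ * Z) * (SigAᵀ * SigA) * Z⁻¹ := by
              simp [Matrix.mul_assoc]
          _ = Z * ((SigAᵀ * SigA) ^ i * (SigAᵀ * SigA)) * Z⁻¹ := by
              rw [Matrix.nonsing_inv_mul Z hZ]; simp [Matrix.mul_assoc]
  -- S is diagonal
  set d : Fin n → ℝ := fun j => if (j : ℕ) < r then σ (j : ℕ) ^ 2 else 0 with hd
  have hS : SigAᵀ * SigA = Matrix.diagonal d := by
    ext j k
    simp only [Matrix.mul_apply, Matrix.transpose_apply, hSigA, Matrix.diagonal_apply]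
    by_cases hjk : j = k
    · subst hjk
      by_cases hjr : (j : ℕ) < r
      · have hjm : (j : ℕ) < m := lt_of_lt_of_le hjr hrm
        rw [Finset.sum_eq_single (⟨(j : ℕ), hjm⟩ : Fin m)]
        · simp [hjr, hd, sq]
        · intro l _ hl
          have : ¬ ((l : ℕ) = (j : ℕ) ∧ (l : ℕ) < r) := by
            rintro ⟨h1, -⟩; exact hl (Fin.ext h1)
          simp [this]
        · intro h; exact absurd (Finset.mem_univ _) h
      · have hdj : d j = 0 := by simp [hd, hjr]
        rw [if_pos rfl, hdj]
        apply Finset.sum_eq_zero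
        intro l _
        have : ¬ ((l : ℕ) = (j : ℕ) ∧ (l : ℕ) < r) := by
          rintro ⟨h1, h2⟩; exact hjr (h1 ▸ h2)
        simp [this]
    · rw [if_neg hjk, Finset.sum_eq_zero]
      intro l _
      by_cases h1 : (l : ℕ) = (j : ℕ) ∧ (l : ℕ) < r
      · have : ¬ ((l : ℕ) = (k : ℕ) ∧ (l : ℕ) < r) := by
          rintro ⟨h2, -⟩
          exact hjk (Fin.ext (h1.1.symm.trans h2))
        simp [this]
      · simp [h1]
  -- key matrix identity
  have hkey : ∀ i : ℕ,
      Z * (SigAᵀ * SigA) ^ i * (SigAᵀ * UAᵀ) = Zr * DA ^ (2 * i + 1) * UArᵀ := by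
    intro i
    have hDApow : DA ^ (2 * i + 1) =
        Matrix.diagonal (fun t : Fin r => σ (t : ℕ) ^ (2 * i + 1)) := by
      rw [hDA, Matrix.diagonal_pow]
      rfl
    ext p q
    -- LHS
    have hinner : ∀ j : Fin n, ((SigAᵀ * SigA) ^ i * (SigAᵀ * UAᵀ)) j q =
        if h : (j : ℕ) < r then σ (j : ℕ) ^ (2 * i + 1) * UA q ⟨(j : ℕ), lt_of_lt_of_le h hrm⟩
        else 0 := by
      intro j
      rw [hS, Matrix.diagonal_pow, Matrix.mul_apply]
      simp only [Matrix.diagonal_apply, Matrix.mul_apply, Matrix.transpose_apply, hSigA]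
      rw [Finset.sum_eq_single j]
      · by_cases hjr : (j : ℕ) < r
        · have hjm : (j : ℕ) < m := lt_of_lt_of_le hjr hrm
          rw [dif_pos hjr, if_pos rfl]
          rw [Finset.sum_eq_single (⟨(j : ℕ), hjm⟩ : Fin m)]
          · simp only [hd, Pi.pow_apply, if_pos hjr]
            split_ifs with h
            · ring
            · exact absurd (by simp [hjr]) h
          · intro l _ hl
            have : ¬ ((l : ℕ) = (j : ℕ) ∧ (l : ℕ) < r) := by
              rintro ⟨h1, -⟩; exact hl (Fin.ext h1)
            simp [this]
          · intro h; exact absurd (Finset.mem_univ _) h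
        · rw [dif_neg hjr, if_pos rfl]
          have hsum : (∑ x : Fin m,
              (if (x : ℕ) = (j : ℕ) ∧ (x : ℕ) < r then σ (x : ℕ) else 0) * UA q x) = 0 := by
            apply Finset.sum_eq_zero
            intro l _
            have : ¬ ((l : ℕ) = (j : ℕ) ∧ (l : ℕ) < r) := by
              rintro ⟨h1, h2⟩; exact hjr (h1 ▸ h2)
            simp [this]
          rw [hsum, mul_zero]
      · intro k _ hk
        rw [if_neg (Ne.symm hk), zero_mul]
      · intro h; exact absurd (Finset.mem_univ _) h
    have hLHS : (Z * (SigAᵀ * SigA) ^ i * (SigAᵀ * UAᵀ)) p q =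
        ∑ j : Fin n, Z p j * (if h : (j : ℕ) < r then
          σ (j : ℕ) ^ (2 * i + 1) * UA q ⟨(j : ℕ), lt_of_lt_of_le h hrm⟩ else 0) := by
      rw [Matrix.mul_assoc, Matrix.mul_apply]
      exact Finset.sum_congr rfl fun j _ => by rw [hinner j]
    -- common ℕ-indexed form
    set F : ℕ → ℝ := fun j => if h : j < r then
        Z p ⟨j, lt_of_lt_of_le h hrn⟩ * (σ j ^ (2 * i + 1) *
          UA q ⟨j, lt_of_lt_of_le h hrm⟩) else 0 with hF
    have hLHS2 : (Z * (SigAᵀ * SigA) ^ i * (SigAᵀ * UAᵀ)) p q = ∑ j ∈ Finset.range n, F j := by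
      rw [hLHS, ← Fin.sum_univ_eq_sum_range]
      refine Finset.sum_congr rfl fun j _ => ?_
      by_cases hjr : (j : ℕ) < r
      · rw [dif_pos hjr]; simp only [hF, dif_pos hjr]
      · rw [dif_neg hjr]; simp only [hF, dif_neg hjr, mul_zero]
    have hRHS : (Zr * DA ^ (2 * i + 1) * UArᵀ) p q = ∑ j ∈ Finset.range r, F j := by
      rw [hDApow, hZr, hUAr, Matrix.mul_apply, ← Fin.sum_univ_eq_sum_range]
      refine Finset.sum_congr rfl fun t _ => ?_
      have htr : (t : ℕ) < r := t.isLt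
      simp only [hF, dif_pos htr, Matrix.mul_apply, Matrix.diagonal_apply,
        Matrix.submatrix_apply, Matrix.transpose_apply, id]
      rw [Finset.sum_eq_single t]
      · rw [if_pos rfl]
        have : (Fin.castLE hrn t) = (⟨(t : ℕ), lt_of_lt_of_le htr hrn⟩ : Fin n) := rfl
        have h2 : (Fin.castLE hrm t) = (⟨(t : ℕ), lt_of_lt_of_le htr hrm⟩ : Fin m) := rfl
        rw [this, h2]; ring
      · intro k _ hk; rw [if_neg hk, mul_zero]
      · intro h; exact absurd (Finset.mem_univ _) h
    rw [hLHS2, hRHS]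
    symm
    apply Finset.sum_subset (Finset.range_subset_range.mpr hrn)
    intro j _ hj
    rw [Finset.mem_range, not_lt] at hj
    simp only [hF, dif_neg (not_lt.mpr hj)]
  -- main pointwise identity
  have hmain : ∀ i : ℕ,
      (N * Aᵀ * M⁻¹ * A) ^ i * (N * Aᵀ * M⁻¹) = Zr * DA ^ (2 * i + 1) * UArᵀ * LM := by
    intro i
    rw [hpow i, hB]
    calc Z * (SigAᵀ * SigA) ^ i * Z⁻¹ * (Z * SigAᵀ * UAᵀ * LM)
        = Z * (SigAᵀ * SigA) ^ i * (Z⁻¹ * Z) * (SigAᵀ * UAᵀ) * LM := by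
          simp [Matrix.mul_assoc]
      _ = Z * (SigAᵀ * SigA) ^ i * (SigAᵀ * UAᵀ) * LM := by
          rw [Matrix.nonsing_inv_mul Z hZ]; simp [Matrix.mul_assoc]
      _ = Zr * DA ^ (2 * i + 1) * UArᵀ * LM := by rw [hkey i]
  constructor
  · intro i; rw [hmain i]
  · intro k _
    congr 1
    ext w
    constructor
    · rintro ⟨i, hik, rfl⟩; exact ⟨i, hik, by rw [hmain i]⟩
    · rintro ⟨i, hik, rfl⟩; exact ⟨i, hik, by rw [hmain i]⟩
end

section
/- Let N ∈ ℝ^{n×n} be symmetric positive definite. Let (F_1, F_2) and (G_1, G_2) be two n×n matrices whose columns are N^{-1}-orthonormal bases of ℝ^n (i.e. (F_1,F_2)ᵀ N^{-1} (F_1,F_2) = I and (G_1,G_2)ᵀ N^{-1} (G_1,G_2) = I), with F_1, G_1 ∈ ℝ^{n×k}. Let F = span(F_1) and G = span(G_1). Then dist(F, G) = ‖F_2ᵀ N^{-1} G_1‖_2, where ‖·‖_2 is the spectral norm. -/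
open Matrix Real

/-- The spectral (operator 2-) norm of a real matrix. -/
noncomputable def matrixSpectralNorm {p q : ℕ} (A : Matrix (Fin p) (Fin q) ℝ) : ℝ :=
  ‖LinearMap.toContinuousLinearMap (Matrix.toEuclideanLin A)‖

/-- The maximum canonical angle `Θ(F,G)` between two subspaces of `ℝⁿ` equipped with the
`W`-inner product `⟨x, x'⟩_W = xᵀ W x'` (here `W` plays the role of `N⁻¹`). -/
noncomputable def maxCanonicalAngle {n : ℕ} (W : Matrix (Fin n) (Fin n) ℝ)
    (F G : Submodule ℝ (Fin n → ℝ)) : ℝ :=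
  ⨆ u : {u : Fin n → ℝ // u ∈ F ∧ u ≠ 0},
    ⨅ v : {v : Fin n → ℝ // v ∈ G ∧ v ≠ 0},
      Real.arccos (|u.1 ⬝ᵥ (W *ᵥ v.1)| /
        (Real.sqrt (u.1 ⬝ᵥ (W *ᵥ u.1)) * Real.sqrt (v.1 ⬝ᵥ (W *ᵥ v.1))))

/-- The distance `dist(F,G) = sin Θ(F,G)` between two subspaces. -/
noncomputable def subspaceDist {n : ℕ} (W : Matrix (Fin n) (Fin n) ℝ)
    (F G : Submodule ℝ (Fin n → ℝ)) : ℝ :=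
  Real.sin (maxCanonicalAngle W F G)

namespace SinThetaAux

noncomputable def eu {p : ℕ} (y : Fin p → ℝ) : EuclideanSpace ℝ (Fin p) :=
  (WithLp.equiv 2 _).symm y

lemma eu_norm {p : ℕ} (y : Fin p → ℝ) : ‖eu y‖ = Real.sqrt (y ⬝ᵥ y) := by
  rw [EuclideanSpace.norm_eq]
  congr 1
  simp [dotProduct, eu, sq_abs, sq]

lemma dot_self_nonneg {p : ℕ} (y : Fin p → ℝ) : 0 ≤ y ⬝ᵥ y :=
  Finset.sum_nonneg fun i _ => mul_self_nonneg _

lemma eu_norm_sq {p : ℕ} (y : Fin p → ℝ) : ‖eu y‖ ^ 2 = y ⬝ᵥ y := by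
  rw [eu_norm, Real.sq_sqrt (dot_self_nonneg y)]

lemma eu_inner {p : ℕ} (x y : Fin p → ℝ) : (inner ℝ (eu x) (eu y) : ℝ) = x ⬝ᵥ y := by
  simp [eu, PiLp.inner_apply, dotProduct, RCLike.inner_apply, mul_comm]

lemma eu_smul {p : ℕ} (r : ℝ) (y : Fin p → ℝ) : eu (r • y) = r • eu y := rfl

lemma eu_zero {p : ℕ} : eu (0 : Fin p → ℝ) = 0 := rfl

lemma eu_norm_pos {p : ℕ} {y : Fin p → ℝ} (hy : y ≠ 0) : 0 < ‖eu y‖ := by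
  rw [eu_norm]
  apply Real.sqrt_pos.2
  rcases lt_or_eq_of_le (dot_self_nonneg y) with h | h
  · exact h
  · exact absurd (dotProduct_self_eq_zero.1 h.symm) hy

noncomputable def toCLM {p q : ℕ} (A : Matrix (Fin p) (Fin q) ℝ) :
    EuclideanSpace ℝ (Fin q) →L[ℝ] EuclideanSpace ℝ (Fin p) :=
  LinearMap.toContinuousLinearMap (Matrix.toEuclideanLin A)

lemma toCLM_eu {p q : ℕ} (A : Matrix (Fin p) (Fin q) ℝ) (x : Fin q → ℝ) :
    toCLM A (eu x) = eu (A *ᵥ x) := rfl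

lemma eu_surj {p : ℕ} (x : EuclideanSpace ℝ (Fin p)) : ∃ y, eu y = x :=
  ⟨(WithLp.equiv 2 _) x, rfl⟩

lemma exists_min {p q : ℕ} [NeZero q] (A : Matrix (Fin p) (Fin q) ℝ) :
    ∃ c : Fin q → ℝ, ‖eu c‖ = 1 ∧
      ∀ d : Fin q → ℝ, ‖eu d‖ = 1 → ‖eu (A *ᵥ c)‖ ≤ ‖eu (A *ᵥ d)‖ := by
  have hsne : (Metric.sphere (0 : EuclideanSpace ℝ (Fin q)) 1).Nonempty := by
    refine ⟨EuclideanSpace.single ⟨0, Nat.pos_of_ne_zero (NeZero.ne q)⟩ 1, ?_⟩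
    simp [mem_sphere_iff_norm, EuclideanSpace.norm_single]
  obtain ⟨x, hxs, hx⟩ := (isCompact_sphere (0 : EuclideanSpace ℝ (Fin q)) 1).exists_isMinOn
    hsne (((toCLM A).continuous.norm).continuousOn)
  obtain ⟨c, rfl⟩ := eu_surj x
  refine ⟨c, by simpa [mem_sphere_iff_norm] using hxs, fun d hd => ?_⟩
  have := hx (a := eu d) (by simpa [mem_sphere_iff_norm] using hd)
  simpa [toCLM_eu] using this

lemma exists_max {p q : ℕ} [NeZero q] (A : Matrix (Fin p) (Fin q) ℝ) :
    ∃ c : Fin q → ℝ, ‖eu c‖ = 1 ∧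
      ∀ d : Fin q → ℝ, ‖eu d‖ = 1 → ‖eu (A *ᵥ d)‖ ≤ ‖eu (A *ᵥ c)‖ := by
  have hsne : (Metric.sphere (0 : EuclideanSpace ℝ (Fin q)) 1).Nonempty := by
    refine ⟨EuclideanSpace.single ⟨0, Nat.pos_of_ne_zero (NeZero.ne q)⟩ 1, ?_⟩
    simp [mem_sphere_iff_norm, EuclideanSpace.norm_single]
  obtain ⟨x, hxs, hx⟩ := (isCompact_sphere (0 : EuclideanSpace ℝ (Fin q)) 1).exists_isMaxOn
    hsne (((toCLM A).continuous.norm).continuousOn)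
  obtain ⟨c, rfl⟩ := eu_surj x
  refine ⟨c, by simpa [mem_sphere_iff_norm] using hxs, fun d hd => ?_⟩
  have := hx (a := eu d) (by simpa [mem_sphere_iff_norm] using hd)
  simpa [toCLM_eu] using this


lemma opNorm_le_max {p q : ℕ} (A : Matrix (Fin p) (Fin q) ℝ) {C : ℝ} (hC : 0 ≤ C)
    (h : ∀ d : Fin q → ℝ, ‖eu d‖ = 1 → ‖eu (A *ᵥ d)‖ ≤ C) :
    ‖toCLM A‖ ≤ C := by
  refine ContinuousLinearMap.opNorm_le_bound _ hC fun x => ?_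
  obtain ⟨y, rfl⟩ := eu_surj x
  rcases eq_or_ne y 0 with rfl | hy
  · simp [toCLM_eu, Matrix.mulVec_zero, eu_zero]
  · have hs : 0 < ‖eu y‖ := eu_norm_pos hy
    have hunit : ‖eu (‖eu y‖⁻¹ • y)‖ = 1 := by
      rw [eu_smul, norm_smul, norm_inv, norm_norm]
      field_simp
    have := h _ hunit
    rw [Matrix.mulVec_smul, eu_smul, norm_smul, norm_inv, norm_norm] at this
    rw [toCLM_eu]
    have h2 : ‖eu (A *ᵥ y)‖ ≤ C * ‖eu y‖ := by
      rw [inv_mul_le_iff₀ hs] at this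
      linarith [this]
    exact h2

lemma opNorm_eq_max {p q : ℕ} [NeZero q] (A : Matrix (Fin p) (Fin q) ℝ) :
    ∃ d : Fin q → ℝ, ‖eu d‖ = 1 ∧ ‖toCLM A‖ = ‖eu (A *ᵥ d)‖ ∧
      ∀ e : Fin q → ℝ, ‖eu e‖ = 1 → ‖eu (A *ᵥ e)‖ ≤ ‖eu (A *ᵥ d)‖ := by
  obtain ⟨d, hd, hmax⟩ := exists_max A
  refine ⟨d, hd, le_antisymm (opNorm_le_max A (norm_nonneg _) hmax) ?_, hmax⟩
  calc ‖eu (A *ᵥ d)‖ = ‖toCLM A (eu d)‖ := by rw [toCLM_eu]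
  _ ≤ ‖toCLM A‖ * ‖eu d‖ := (toCLM A).le_opNorm _
  _ = ‖toCLM A‖ := by rw [hd, mul_one]

lemma opNorm_transpose_le {p q : ℕ} (A : Matrix (Fin p) (Fin q) ℝ) :
    ‖toCLM Aᵀ‖ ≤ ‖toCLM A‖ := by
  refine opNorm_le_max Aᵀ (norm_nonneg _) fun y hy => ?_
  set z := Aᵀ *ᵥ y with hzdef
  have key : z ⬝ᵥ z = y ⬝ᵥ (A *ᵥ z) := by
    rw [Matrix.dotProduct_mulVec y A z, ← Matrix.mulVec_transpose, ← hzdef]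
  have h1 : ‖eu z‖ ^ 2 = (inner ℝ (eu y) (eu (A *ᵥ z)) : ℝ) := by
    rw [eu_inner, eu_norm_sq, key]
  have h2 : (inner ℝ (eu y) (eu (A *ᵥ z)) : ℝ) ≤ ‖eu y‖ * ‖eu (A *ᵥ z)‖ :=
    real_inner_le_norm _ _
  have h3 : ‖eu (A *ᵥ z)‖ ≤ ‖toCLM A‖ * ‖eu z‖ := by
    rw [← toCLM_eu]; exact (toCLM A).le_opNorm _
  rcases eq_or_lt_of_le (norm_nonneg (eu z)) with h0 | h0
  · rw [← h0]; exact norm_nonneg _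
  · have : ‖eu z‖ ^ 2 ≤ 1 * (‖toCLM A‖ * ‖eu z‖) := by
      rw [hy] at *
      nlinarith [h1, h2, h3, norm_nonneg (eu (A *ᵥ z))]
    rw [one_mul, sq] at this
    exact le_of_mul_le_mul_right (by linarith) h0

lemma opNorm_transpose {p q : ℕ} (A : Matrix (Fin p) (Fin q) ℝ) :
    ‖toCLM Aᵀ‖ = ‖toCLM A‖ :=
  le_antisymm (opNorm_transpose_le A) (by simpa using opNorm_transpose_le Aᵀ)

lemma toCLM_one {q : ℕ} (x : Fin q → ℝ) : toCLM (1 : Matrix (Fin q) (Fin q) ℝ) (eu x) = eu x := by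
  rw [toCLM_eu, Matrix.one_mulVec]

lemma min_val {q : ℕ} [NeZero q] (A : Matrix (Fin q) (Fin q) ℝ)
    {c : Fin q → ℝ} (hc : ‖eu c‖ = 1)
    (hmin : ∀ d : Fin q → ℝ, ‖eu d‖ = 1 → ‖eu (A *ᵥ c)‖ ≤ ‖eu (A *ᵥ d)‖) :
    ‖eu (A *ᵥ c)‖ = if A.det = 0 then 0 else ‖toCLM A⁻¹‖⁻¹ := by
  rcases eq_or_ne A.det 0 with hdet | hdet
  · rw [if_pos hdet]
    obtain ⟨v, hv, hAv⟩ := (Matrix.exists_mulVec_eq_zero_iff).2 hdet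
    have hs : 0 < ‖eu v‖ := eu_norm_pos hv
    have hunit : ‖eu (‖eu v‖⁻¹ • v)‖ = 1 := by
      rw [eu_smul, norm_smul, norm_inv, norm_norm]; field_simp
    have := hmin _ hunit
    rw [Matrix.mulVec_smul, hAv, smul_zero, eu_zero, norm_zero] at this
    exact le_antisymm this (norm_nonneg _)
  · rw [if_neg hdet]
    have hu : IsUnit A.det := isUnit_iff_ne_zero.2 hdet
    have hBA : A⁻¹ * A = 1 := Matrix.nonsing_inv_mul A hu
    have hAB : A * A⁻¹ = 1 := Matrix.mul_nonsing_inv A hu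
    set nB := ‖toCLM A⁻¹‖ with hnB
    -- nB > 0
    have hinv : ∀ d : Fin q → ℝ, A⁻¹ *ᵥ (A *ᵥ d) = d := by
      intro d; rw [Matrix.mulVec_mulVec, hBA, Matrix.one_mulVec]
    have hnB_pos : 0 < nB := by
      have h1 : ‖eu c‖ ≤ nB * ‖eu (A *ᵥ c)‖ := by
        calc ‖eu c‖ = ‖toCLM A⁻¹ (eu (A *ᵥ c))‖ := by rw [toCLM_eu, hinv]
        _ ≤ nB * ‖eu (A *ᵥ c)‖ := (toCLM A⁻¹).le_opNorm _
      rw [hc] at h1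
      by_contra h
      push_neg at h
      have : nB = 0 := le_antisymm h (norm_nonneg _)
      rw [this, zero_mul] at h1; linarith
    -- lower bound
    have hlower : ∀ d : Fin q → ℝ, ‖eu d‖ = 1 → nB⁻¹ ≤ ‖eu (A *ᵥ d)‖ := by
      intro d hd
      have h1 : ‖eu d‖ ≤ nB * ‖eu (A *ᵥ d)‖ := by
        calc ‖eu d‖ = ‖toCLM A⁻¹ (eu (A *ᵥ d))‖ := by rw [toCLM_eu, hinv]
        _ ≤ nB * ‖eu (A *ᵥ d)‖ := (toCLM A⁻¹).le_opNorm _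
      rw [hd] at h1
      rw [inv_le_iff_one_le_mul₀ hnB_pos]
      linarith
    -- upper bound: pick maximizer of A⁻¹
    obtain ⟨y, hy, hval, _⟩ := opNorm_eq_max A⁻¹
    have hw_pos : 0 < ‖eu (A⁻¹ *ᵥ y)‖ := by rw [← hval]; exact hnB_pos
    set w := A⁻¹ *ᵥ y with hwdef
    have hunit : ‖eu (‖eu w‖⁻¹ • w)‖ = 1 := by
      rw [eu_smul, norm_smul, norm_inv, norm_norm]; field_simp
    have hAw : A *ᵥ (‖eu w‖⁻¹ • w) = ‖eu w‖⁻¹ • y := by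
      rw [Matrix.mulVec_smul, hwdef, Matrix.mulVec_mulVec, hAB, Matrix.one_mulVec]
    have hupper : ‖eu (A *ᵥ (‖eu w‖⁻¹ • w))‖ = nB⁻¹ := by
      rw [hAw, eu_smul, norm_smul, norm_inv, norm_norm, hy, mul_one, ← hval]
    exact le_antisymm (by rw [← hupper]; exact hmin _ hunit) (hlower c hc)

lemma min_transpose {q : ℕ} [NeZero q] (A : Matrix (Fin q) (Fin q) ℝ)
    {c c' : Fin q → ℝ} (hc : ‖eu c‖ = 1)
    (hmin : ∀ d : Fin q → ℝ, ‖eu d‖ = 1 → ‖eu (A *ᵥ c)‖ ≤ ‖eu (A *ᵥ d)‖)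
    (hc' : ‖eu c'‖ = 1)
    (hmin' : ∀ d : Fin q → ℝ, ‖eu d‖ = 1 → ‖eu (Aᵀ *ᵥ c')‖ ≤ ‖eu (Aᵀ *ᵥ d)‖) :
    ‖eu (A *ᵥ c)‖ = ‖eu (Aᵀ *ᵥ c')‖ := by
  rw [min_val A hc hmin, min_val Aᵀ hc' hmin', Matrix.det_transpose,
    ← Matrix.transpose_nonsing_inv, opNorm_transpose]

lemma arccos_anti {x y : ℝ} (h : x ≤ y) : Real.arccos y ≤ Real.arccos x :=
  sub_le_sub_left (Real.monotone_arcsin h) _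

lemma quad_of_id {a b q : ℕ} {A : Matrix (Fin a) (Fin q) ℝ} {B : Matrix (Fin b) (Fin q) ℝ}
    (h : Aᵀ * A + Bᵀ * B = 1) (c : Fin q → ℝ) :
    (A *ᵥ c) ⬝ᵥ (A *ᵥ c) + (B *ᵥ c) ⬝ᵥ (B *ᵥ c) = c ⬝ᵥ c := by
  have h1 : c ⬝ᵥ ((Aᵀ * A + Bᵀ * B) *ᵥ c) = c ⬝ᵥ c := by rw [h, Matrix.one_mulVec]
  rw [Matrix.add_mulVec, dotProduct_add, ← Matrix.mulVec_mulVec, ← Matrix.mulVec_mulVec,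
    Matrix.dotProduct_mulVec c Aᵀ, Matrix.dotProduct_mulVec c Bᵀ,
    Matrix.vecMul_transpose, Matrix.vecMul_transpose] at h1
  exact h1

lemma dot_XY {n k l : ℕ} (X : Matrix (Fin n) (Fin k) ℝ) (Y : Matrix (Fin n) (Fin l) ℝ)
    (W : Matrix (Fin n) (Fin n) ℝ) (c : Fin k → ℝ) (d : Fin l → ℝ) :
    (X *ᵥ c) ⬝ᵥ (W *ᵥ (Y *ᵥ d)) = c ⬝ᵥ ((Xᵀ * W * Y) *ᵥ d) := by
  rw [← Matrix.vecMul_transpose, ← Matrix.dotProduct_mulVec,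
    Matrix.mulVec_mulVec, Matrix.mulVec_mulVec, Matrix.mul_assoc]

lemma blocks {n k j : ℕ} {W : Matrix (Fin n) (Fin n) ℝ}
    {X : Matrix (Fin n) (Fin k) ℝ} {Y : Matrix (Fin n) (Fin j) ℝ}
    (hkj : k + j = n)
    (h : (fromCols X Y)ᵀ * W * fromCols X Y = 1) :
    Xᵀ * W * X = 1 ∧ Xᵀ * W * Y = 0 ∧ Yᵀ * W * X = 0 ∧ Yᵀ * W * Y = 1 ∧
      X * (Xᵀ * W) + Y * (Yᵀ * W) = 1 := by
  have hexp : (fromCols X Y)ᵀ * W * fromCols X Y =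
      fromBlocks (Xᵀ * W * X) (Xᵀ * W * Y) (Yᵀ * W * X) (Yᵀ * W * Y) := by
    rw [Matrix.transpose_fromCols, Matrix.fromRows_mul, Matrix.fromRows_mul_fromCols]
  rw [hexp, ← Matrix.fromBlocks_one] at h
  obtain ⟨h11, h12, h21, h22⟩ := Matrix.fromBlocks_inj.1 h
  refine ⟨h11, h12, h21, h22, ?_⟩
  have e : Fin k ⊕ Fin j ≃ Fin n := finSumFinEquiv.trans (finCongr hkj)
  have h1 : ((fromCols X Y)ᵀ * W) * fromCols X Y = 1 := by
    rw [hexp, h11, h12, h21, h22, Matrix.fromBlocks_one]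
  have h2 : fromCols X Y * ((fromCols X Y)ᵀ * W) = 1 :=
    (Matrix.mul_eq_one_comm_of_equiv e).1 h1
  rw [Matrix.transpose_fromCols, Matrix.fromRows_mul,
    Matrix.fromCols_mul_fromRows] at h2
  exact h2

lemma cs_identity {n k j q : ℕ} {W : Matrix (Fin n) (Fin n) ℝ} (hW : Wᵀ = W)
    {G₁ : Matrix (Fin n) (Fin k) ℝ} {G₂ : Matrix (Fin n) (Fin j) ℝ}
    {F₁ : Matrix (Fin n) (Fin q) ℝ}
    (hGcomp : G₁ * (G₁ᵀ * W) + G₂ * (G₂ᵀ * W) = 1) (hF11 : F₁ᵀ * W * F₁ = 1) :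
    (G₁ᵀ * W * F₁)ᵀ * (G₁ᵀ * W * F₁) + (G₂ᵀ * W * F₁)ᵀ * (G₂ᵀ * W * F₁) = 1 := by
  have key : (G₁ * (G₁ᵀ * W) + G₂ * (G₂ᵀ * W)) * F₁ = F₁ := by rw [hGcomp, Matrix.one_mul]
  calc (G₁ᵀ * W * F₁)ᵀ * (G₁ᵀ * W * F₁) + (G₂ᵀ * W * F₁)ᵀ * (G₂ᵀ * W * F₁)
      = F₁ᵀ * W * ((G₁ * (G₁ᵀ * W) + G₂ * (G₂ᵀ * W)) * F₁) := by
        simp only [Matrix.transpose_mul, Matrix.transpose_transpose, hW,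
          Matrix.add_mul, Matrix.mul_add, Matrix.mul_assoc]
    _ = F₁ᵀ * W * F₁ := by rw [key]
    _ = 1 := hF11

end SinThetaAux


lemma spectralNorm_eq {p q : ℕ} (A : Matrix (Fin p) (Fin q) ℝ) :
    matrixSpectralNorm A = ‖SinThetaAux.toCLM A‖ := rfl

set_option maxHeartbeats 2000000 in
open SinThetaAux in
/-- If `(F₁, F₂)` and `(G₁, G₂)` are `N⁻¹`-orthonormal bases of `ℝⁿ` with
`F₁, G₁ ∈ ℝ^{n×k}`, and `F = span(F₁)`, `G = span(G₁)`, then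
`dist(F, G) = ‖F₂ᵀ N⁻¹ G₁‖₂`. -/
theorem dist_subspaces_eq_spectralNorm {n k : ℕ} (hkn : k ≤ n)
    (N : Matrix (Fin n) (Fin n) ℝ) (hN : N.PosDef)
    (F₁ G₁ : Matrix (Fin n) (Fin k) ℝ)
    (F₂ G₂ : Matrix (Fin n) (Fin (n - k)) ℝ)
    (hF : (Matrix.fromCols F₁ F₂)ᵀ * N⁻¹ * Matrix.fromCols F₁ F₂ = 1)
    (hG : (Matrix.fromCols G₁ G₂)ᵀ * N⁻¹ * Matrix.fromCols G₁ G₂ = 1) :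
    subspaceDist N⁻¹ (Submodule.span ℝ (Set.range F₁ᵀ))
        (Submodule.span ℝ (Set.range G₁ᵀ)) =
      matrixSpectralNorm (F₂ᵀ * N⁻¹ * G₁) := by
  classical
  have hNs : Nᵀ = N := by
    have h := hN.isHermitian.eq
    rwa [Matrix.conjTranspose_eq_transpose_of_trivial] at h
  have hW : (N⁻¹)ᵀ = N⁻¹ := by rw [Matrix.transpose_nonsing_inv, hNs]
  set W : Matrix (Fin n) (Fin n) ℝ := N⁻¹ with hWdef
  obtain ⟨hF11, hF12, hF21, hF22, hFcomp⟩ := SinThetaAux.blocks (Nat.add_sub_cancel' hkn) hF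
  obtain ⟨hG11, hG12, hG21, hG22, hGcomp⟩ := SinThetaAux.blocks (Nat.add_sub_cancel' hkn) hG
  rcases Nat.eq_zero_or_pos k with rfl | hk
  · -- degenerate case k = 0
    haveI hempty : IsEmpty {u : Fin n → ℝ //
        u ∈ Submodule.span ℝ (Set.range F₁ᵀ) ∧ u ≠ 0} := by
      constructor
      rintro ⟨u, hu, hne⟩
      have hr : Set.range F₁ᵀ = ∅ := Set.range_eq_empty _
      rw [hr, Submodule.span_empty, Submodule.mem_bot] at hu
      exact hne hu
    have hL : subspaceDist W (Submodule.span ℝ (Set.range F₁ᵀ))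
        (Submodule.span ℝ (Set.range G₁ᵀ)) = 0 := by
      rw [subspaceDist, maxCanonicalAngle, iSup, Set.range_eq_empty, Real.sSup_empty,
        Real.sin_zero]
    rw [hL, spectralNorm_eq]
    have hzero : toCLM (F₂ᵀ * W * G₁) = 0 := by
      ext x i
      have hx : x = 0 := Subsingleton.elim _ _
      rw [hx, map_zero]
      simp
    rw [hzero, norm_zero]
  · have : NeZero k := ⟨hk.ne'⟩
    set M : Matrix (Fin k) (Fin k) ℝ := G₁ᵀ * W * F₁ with hMdef
    set Q : Matrix (Fin (n - k)) (Fin k) ℝ := F₂ᵀ * W * G₁ with hQdef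
    have hMT : F₁ᵀ * W * G₁ = Mᵀ := by
      simp only [hMdef, Matrix.transpose_mul, Matrix.transpose_transpose, hW, Matrix.mul_assoc]
    have id1 : Mᵀ * M + (G₂ᵀ * W * F₁)ᵀ * (G₂ᵀ * W * F₁) = 1 :=
      SinThetaAux.cs_identity hW hGcomp hF11
    have id2 : (Mᵀ)ᵀ * Mᵀ + Qᵀ * Q = 1 := by
      have h := SinThetaAux.cs_identity hW hFcomp hG11
      rwa [hMT] at h
    -- injectivity
    have hFinj : ∀ c : Fin k → ℝ, F₁ *ᵥ c = 0 → c = 0 := by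
      intro c h
      have h2 : (F₁ᵀ * W) *ᵥ (F₁ *ᵥ c) = c := by
        rw [Matrix.mulVec_mulVec, Matrix.mul_assoc, ← Matrix.mul_assoc, hF11, Matrix.one_mulVec]
      rw [h, Matrix.mulVec_zero] at h2
      exact h2.symm
    have hGinj : ∀ c : Fin k → ℝ, G₁ *ᵥ c = 0 → c = 0 := by
      intro c h
      have h2 : (G₁ᵀ * W) *ᵥ (G₁ *ᵥ c) = c := by
        rw [Matrix.mulVec_mulVec, Matrix.mul_assoc, ← Matrix.mul_assoc, hG11, Matrix.one_mulVec]
      rw [h, Matrix.mulVec_zero] at h2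
      exact h2.symm
    have hFmem : ∀ u : Fin n → ℝ,
        u ∈ Submodule.span ℝ (Set.range F₁ᵀ) ↔ ∃ c, F₁ *ᵥ c = u := by
      intro u
      rw [show Set.range F₁ᵀ = Set.range (Matrix.col F₁) from rfl]
      rw [← Matrix.range_mulVecLin, LinearMap.mem_range]
      simp [Matrix.mulVecLin_apply]
    have hGmem : ∀ v : Fin n → ℝ,
        v ∈ Submodule.span ℝ (Set.range G₁ᵀ) ↔ ∃ d, G₁ *ᵥ d = v := by
      intro v
      rw [show Set.range G₁ᵀ = Set.range (Matrix.col G₁) from rfl]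
      rw [← Matrix.range_mulVecLin, LinearMap.mem_range]
      simp [Matrix.mulVecLin_apply]
    have hone : (fun _ => (1:ℝ) : Fin k → ℝ) ≠ 0 := by
      intro h
      have := congrFun h ⟨0, hk⟩
      norm_num at this
    haveI hGne : Nonempty {v : Fin n → ℝ //
        v ∈ Submodule.span ℝ (Set.range G₁ᵀ) ∧ v ≠ 0} :=
      ⟨⟨G₁ *ᵥ (fun _ => (1:ℝ)), (hGmem _).2 ⟨_, rfl⟩, fun h => hone (hGinj _ h)⟩⟩
    haveI hFne : Nonempty {u : Fin n → ℝ //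
        u ∈ Submodule.span ℝ (Set.range F₁ᵀ) ∧ u ≠ 0} :=
      ⟨⟨F₁ *ᵥ (fun _ => (1:ℝ)), (hFmem _).2 ⟨_, rfl⟩, fun h => hone (hFinj _ h)⟩⟩
    -- minimizer of M on the sphere
    obtain ⟨c₀, hc₀, hmin⟩ := SinThetaAux.exists_min M
    set m : ℝ := ‖eu (M *ᵥ c₀)‖ with hmdef
    -- the inner infimum
    have bddB : ∀ (g : {v : Fin n → ℝ // v ∈ Submodule.span ℝ (Set.range G₁ᵀ) ∧ v ≠ 0} → ℝ),
        (∀ i, 0 ≤ g i) → BddBelow (Set.range g) := by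
      intro g hg
      exact ⟨0, by rintro x ⟨i, rfl⟩; exact hg i⟩
    have inner_eq : ∀ (c : Fin k → ℝ), c ≠ 0 →
        (⨅ v : {v : Fin n → ℝ // v ∈ Submodule.span ℝ (Set.range G₁ᵀ) ∧ v ≠ 0},
          Real.arccos (|(F₁ *ᵥ c) ⬝ᵥ (W *ᵥ v.1)| /
            (Real.sqrt ((F₁ *ᵥ c) ⬝ᵥ (W *ᵥ (F₁ *ᵥ c))) * Real.sqrt (v.1 ⬝ᵥ (W *ᵥ v.1))))) =
        Real.arccos (‖eu (M *ᵥ c)‖ / ‖eu c‖) := by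
      intro c hc
      have hcpos : 0 < ‖eu c‖ := eu_norm_pos hc
      have huu : (F₁ *ᵥ c) ⬝ᵥ (W *ᵥ (F₁ *ᵥ c)) = c ⬝ᵥ c := by
        rw [SinThetaAux.dot_XY, hF11, Matrix.one_mulVec]
      have hvv : ∀ d : Fin k → ℝ, (G₁ *ᵥ d) ⬝ᵥ (W *ᵥ (G₁ *ᵥ d)) = d ⬝ᵥ d := fun d => by
        rw [SinThetaAux.dot_XY, hG11, Matrix.one_mulVec]
      have huv : ∀ d : Fin k → ℝ, (F₁ *ᵥ c) ⬝ᵥ (W *ᵥ (G₁ *ᵥ d)) = (M *ᵥ c) ⬝ᵥ d := fun d => by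
        rw [SinThetaAux.dot_XY, hMT, Matrix.dotProduct_mulVec, Matrix.vecMul_transpose]
      apply le_antisymm
      · -- iInf ≤ target : exhibit a good v
        rcases eq_or_ne (M *ᵥ c) 0 with hMc | hMc
        · have hd : (fun _ => (1:ℝ) : Fin k → ℝ) ≠ 0 := by
            intro h
            have := congrFun h ⟨0, hk⟩
            norm_num at this
          have hvne : G₁ *ᵥ (fun _ => (1:ℝ)) ≠ 0 := fun h => hd (hGinj _ h)
          refine ciInf_le_of_le (bddB _ fun i => Real.arccos_nonneg _)
            ⟨G₁ *ᵥ (fun _ => (1:ℝ)), (hGmem _).2 ⟨_, rfl⟩, hvne⟩ ?_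
          rw [huv, hMc, zero_dotProduct, abs_zero, zero_div, eu_zero, norm_zero, zero_div]
        · have hvne : G₁ *ᵥ (M *ᵥ c) ≠ 0 := fun h => hMc (hGinj _ h)
          have hdpos : 0 < ‖eu (M *ᵥ c)‖ := eu_norm_pos hMc
          refine ciInf_le_of_le (bddB _ fun i => Real.arccos_nonneg _)
            ⟨G₁ *ᵥ (M *ᵥ c), (hGmem _).2 ⟨_, rfl⟩, hvne⟩ ?_
          apply le_of_eq
          rw [huv, hvv, huu, ← eu_norm, ← eu_norm]
          congr 1
          rw [← eu_norm_sq]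
          rw [abs_of_nonneg (by positivity)]
          field_simp
      · -- target ≤ iInf
        apply le_ciInf
        rintro ⟨v, hvG, hvne⟩
        obtain ⟨d, rfl⟩ := (hGmem v).1 hvG
        have hd : d ≠ 0 := fun h => hvne (by rw [h, Matrix.mulVec_zero])
        have hdpos : 0 < ‖eu d‖ := eu_norm_pos hd
        apply SinThetaAux.arccos_anti
        rw [huu, huv, hvv, ← eu_norm, ← eu_norm]
        have hCS : |(M *ᵥ c) ⬝ᵥ d| ≤ ‖eu (M *ᵥ c)‖ * ‖eu d‖ := by
          rw [← eu_inner]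
          exact abs_real_inner_le_norm _ _
        rw [div_le_div_iff₀ (by positivity) hcpos]
        nlinarith [hCS, norm_nonneg (eu (M *ᵥ c)), hcpos.le, hdpos.le]
    -- outer supremum
    have hc₀ne : c₀ ≠ 0 := by
      intro h
      rw [h, eu_zero, norm_zero] at hc₀
      norm_num at hc₀
    have hu₀ne : F₁ *ᵥ c₀ ≠ 0 := fun h => hc₀ne (hFinj _ h)
    have houter : maxCanonicalAngle W (Submodule.span ℝ (Set.range F₁ᵀ))
        (Submodule.span ℝ (Set.range G₁ᵀ)) = Real.arccos m := by
      rw [maxCanonicalAngle]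
      apply le_antisymm
      · apply ciSup_le
        rintro ⟨u, huF, hune⟩
        obtain ⟨c, rfl⟩ := (hFmem u).1 huF
        have hc : c ≠ 0 := fun h => hune (by rw [h, Matrix.mulVec_zero])
        rw [inner_eq c hc]
        apply SinThetaAux.arccos_anti
        have hcpos : 0 < ‖eu c‖ := eu_norm_pos hc
        have hunit : ‖eu (‖eu c‖⁻¹ • c)‖ = 1 := by
          rw [eu_smul, norm_smul, norm_inv, norm_norm]; field_simp
        have h1 := hmin _ hunit
        rw [Matrix.mulVec_smul, eu_smul, norm_smul, norm_inv, norm_norm] at h1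
        rw [le_div_iff₀ hcpos]
        calc m * ‖eu c‖ ≤ (‖eu c‖⁻¹ * ‖eu (M *ᵥ c)‖) * ‖eu c‖ := by
              apply mul_le_mul_of_nonneg_right h1 hcpos.le
          _ = ‖eu (M *ᵥ c)‖ := by field_simp
      · have hbdd : BddAbove (Set.range fun u : {u : Fin n → ℝ //
            u ∈ Submodule.span ℝ (Set.range F₁ᵀ) ∧ u ≠ 0} =>
            ⨅ v : {v : Fin n → ℝ // v ∈ Submodule.span ℝ (Set.range G₁ᵀ) ∧ v ≠ 0},
              Real.arccos (|u.1 ⬝ᵥ (W *ᵥ v.1)| /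
                (Real.sqrt (u.1 ⬝ᵥ (W *ᵥ u.1)) * Real.sqrt (v.1 ⬝ᵥ (W *ᵥ v.1))))) := by
          refine ⟨Real.pi, ?_⟩
          rintro x ⟨u, rfl⟩
          have hd : (fun _ => (1:ℝ) : Fin k → ℝ) ≠ 0 := by
            intro h
            have := congrFun h ⟨0, hk⟩
            norm_num at this
          have hvne : G₁ *ᵥ (fun _ => (1:ℝ)) ≠ 0 := fun h => hd (hGinj _ h)
          refine le_trans (ciInf_le_of_le (bddB _ fun i => Real.arccos_nonneg _)
            ⟨G₁ *ᵥ (fun _ => (1:ℝ)), (hGmem _).2 ⟨_, rfl⟩, hvne⟩ le_rfl) ?_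
          exact Real.arccos_le_pi _
        have hval : (⨅ v : {v : Fin n → ℝ // v ∈ Submodule.span ℝ (Set.range G₁ᵀ) ∧ v ≠ 0},
            Real.arccos (|(F₁ *ᵥ c₀) ⬝ᵥ (W *ᵥ v.1)| /
              (Real.sqrt ((F₁ *ᵥ c₀) ⬝ᵥ (W *ᵥ (F₁ *ᵥ c₀))) *
                Real.sqrt (v.1 ⬝ᵥ (W *ᵥ v.1))))) = Real.arccos m := by
          rw [inner_eq c₀ hc₀ne, hc₀, div_one]
        calc Real.arccos m = _ := hval.symm
          _ ≤ _ := le_ciSup hbdd ⟨F₁ *ᵥ c₀, (hFmem _).2 ⟨_, rfl⟩, hu₀ne⟩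
    -- left side value
    have hLHS : subspaceDist W (Submodule.span ℝ (Set.range F₁ᵀ))
        (Submodule.span ℝ (Set.range G₁ᵀ)) = Real.sqrt (1 - m ^ 2) := by
      rw [subspaceDist, houter, Real.sin_arccos]
    -- right side value
    obtain ⟨d₀, hd₀, hQval, hQmax⟩ := SinThetaAux.opNorm_eq_max Q
    obtain ⟨c₁, hc₁, hmin'⟩ := SinThetaAux.exists_min Mᵀ
    have hmm : m = ‖eu (Mᵀ *ᵥ c₁)‖ := SinThetaAux.min_transpose M hc₀ hmin hc₁ hmin'
    have quadn : ∀ d : Fin k → ℝ,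
        ‖eu (Mᵀ *ᵥ d)‖ ^ 2 + ‖eu (Q *ᵥ d)‖ ^ 2 = ‖eu d‖ ^ 2 := fun d => by
      rw [eu_norm_sq, eu_norm_sq, eu_norm_sq]
      exact SinThetaAux.quad_of_id id2 d
    have h1 : ‖eu (Q *ᵥ d₀)‖ ^ 2 = 1 - ‖eu (Mᵀ *ᵥ c₁)‖ ^ 2 := by
      have e0 := quadn d₀
      have e1 := quadn c₁
      rw [hd₀] at e0
      rw [hc₁] at e1
      have hle1 : ‖eu (Mᵀ *ᵥ c₁)‖ ≤ ‖eu (Mᵀ *ᵥ d₀)‖ := hmin' d₀ hd₀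
      have hle2 : ‖eu (Q *ᵥ c₁)‖ ≤ ‖eu (Q *ᵥ d₀)‖ := hQmax c₁ hc₁
      have hsq : ∀ x y : ℝ, 0 ≤ x → x ≤ y → x ^ 2 ≤ y ^ 2 := fun x y hx hxy => by nlinarith
      have h2 := hsq _ _ (norm_nonneg (eu (Mᵀ *ᵥ c₁))) hle1
      have h3 := hsq _ _ (norm_nonneg (eu (Q *ᵥ c₁))) hle2
      rw [one_pow] at e0 e1
      linarith [e0, e1, h2, h3]
    have hRHS : matrixSpectralNorm Q = Real.sqrt (1 - m ^ 2) := by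
      rw [spectralNorm_eq, hQval, ← Real.sqrt_sq (norm_nonneg (eu (Q *ᵥ d₀))), h1, hmm]
    rw [hLHS, hRHS]
end

section
/- Let σ_1 > σ_2 > … > σ_r > 0 and 1 ≤ k ≤ r−1. Let H_{k1} ∈ ℝ^{k×k} have entries (H_{k1})_{ij} = σ_i^{2(j−1)} and H_{k2} ∈ ℝ^{(r−k)×k} have entries (H_{k2})_{ij} = σ_{k+i}^{2(j−1)}. Then ‖H_{k2} H_{k1}^{-1}‖_2 ≤ √(k(r−k)) · max_{1≤i≤k} |L_i^{(k)}(0)|, where L_i^{(k)}(λ) = Π_{l=1, l≠i}^{k} (λ − σ_l²)/(σ_i² − σ_l²) (with L_1^{(1)} ≡ 1 when k = 1) and ‖·‖_2 is the spectral norm. -/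
open Matrix

lemma spectralNorm_le_of_entries_le {p q : ℕ} (A : Matrix (Fin p) (Fin q) ℝ) (C : ℝ)
    (hC : 0 ≤ C) (h : ∀ i j, |A i j| ≤ C) :
    matrixSpectralNorm A ≤ Real.sqrt ((p : ℝ) * (q : ℝ)) * C := by
  have hb : 0 ≤ Real.sqrt ((p : ℝ) * (q : ℝ)) * C := by positivity
  refine ContinuousLinearMap.opNorm_le_bound _ hb (fun x => ?_)
  have hy : ∀ i, (Matrix.toEuclideanLin A x) i = ∑ j, A i j * x j := by
    intro i
    rw [Matrix.toEuclideanLin_apply]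
    simp [Matrix.mulVec, dotProduct]
  have hxn : ‖x‖ = Real.sqrt (∑ j, |x j| ^ 2) := by
    rw [EuclideanSpace.norm_eq]; simp [Real.norm_eq_abs]
  have hsum : ∑ j, |x j| ≤ Real.sqrt q * ‖x‖ := by
    rw [hxn, ← Real.sqrt_mul (by positivity : (0:ℝ) ≤ (q:ℝ))]
    rw [Real.le_sqrt (by positivity) (by positivity)]
    simpa using sq_sum_le_card_mul_sum_sq (s := Finset.univ) (f := fun j : Fin q => |x j|)
  have hrow : ∀ i, |(Matrix.toEuclideanLin A x) i| ≤ C * (Real.sqrt q * ‖x‖) := by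
    intro i
    rw [hy]
    calc |∑ j, A i j * x j| ≤ ∑ j, |A i j * x j| := Finset.abs_sum_le_sum_abs _ _
      _ ≤ ∑ j, C * |x j| := Finset.sum_le_sum fun j _ => by
            rw [abs_mul]; exact mul_le_mul_of_nonneg_right (h i j) (abs_nonneg _)
      _ = C * ∑ j, |x j| := (Finset.mul_sum _ _ _).symm
      _ ≤ C * (Real.sqrt q * ‖x‖) := mul_le_mul_of_nonneg_left hsum hC
  have hny : ‖Matrix.toEuclideanLin A x‖ = Real.sqrt (∑ i, |(Matrix.toEuclideanLin A x) i| ^ 2) := by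
    rw [EuclideanSpace.norm_eq]; simp [Real.norm_eq_abs]
  have h1 : ‖LinearMap.toContinuousLinearMap (Matrix.toEuclideanLin A) x‖
      = ‖Matrix.toEuclideanLin A x‖ := rfl
  rw [h1, hny]
  have hbd : ∑ i, |(Matrix.toEuclideanLin A x) i| ^ 2 ≤ (p : ℝ) * (C * (Real.sqrt q * ‖x‖)) ^ 2 := by
    calc ∑ i, |(Matrix.toEuclideanLin A x) i| ^ 2
        ≤ ∑ _i : Fin p, (C * (Real.sqrt q * ‖x‖)) ^ 2 := Finset.sum_le_sum fun i _ =>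
          pow_le_pow_left₀ (abs_nonneg _) (hrow i) 2
      _ = (p : ℝ) * (C * (Real.sqrt q * ‖x‖)) ^ 2 := by simp [mul_comm]
  calc Real.sqrt (∑ i, |(Matrix.toEuclideanLin A x) i| ^ 2)
      ≤ Real.sqrt ((p : ℝ) * (C * (Real.sqrt q * ‖x‖)) ^ 2) := Real.sqrt_le_sqrt hbd
    _ = Real.sqrt p * (C * (Real.sqrt q * ‖x‖)) := by
        rw [Real.sqrt_mul (by positivity), Real.sqrt_sq (by positivity)]
    _ = Real.sqrt ((p : ℝ) * (q : ℝ)) * C * ‖x‖ := by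
        rw [Real.sqrt_mul (by positivity)]; ring

lemma lagrange_sum_eq {k : ℕ} (v : Fin k → ℝ) (hv : Function.Injective v)
    (x : ℝ) (m : Fin k) :
    ∑ j, (∏ l ∈ Finset.univ.erase j, (x - v l) / (v j - v l)) * v j ^ (m : ℕ) = x ^ (m : ℕ) := by
  have hvs : Set.InjOn v (Finset.univ : Finset (Fin k)) := fun a _ b _ h => hv h
  have hdeg : (Polynomial.X ^ (m : ℕ) : Polynomial ℝ).degree
      < (Finset.univ : Finset (Fin k)).card := by
    rw [Polynomial.degree_X_pow]
    simp only [Finset.card_univ, Fintype.card_fin]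
    exact_mod_cast m.2
  have h := Lagrange.eq_interpolate (v := v) hvs hdeg
  have h2 := congrArg (Polynomial.eval x) h
  simp only [Lagrange.interpolate_apply, Polynomial.eval_finset_sum, Polynomial.eval_mul,
    Polynomial.eval_C, Polynomial.eval_pow, Polynomial.eval_X, Lagrange.basis,
    Polynomial.eval_prod, Lagrange.basisDivisor, Polynomial.eval_sub] at h2
  rw [h2]
  refine Finset.sum_congr rfl fun j _ => ?_
  rw [mul_comm]
  congr 1
  refine Finset.prod_congr rfl fun l _ => ?_
  rw [div_eq_mul_inv, mul_comm]

/-- For distinct `σ_1 > … > σ_r > 0` and `1 ≤ k ≤ r−1`,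
`‖H_{k2} H_{k1}⁻¹‖₂ ≤ √(k(r−k)) · max_{1≤i≤k} |L_i^{(k)}(0)|`, where `L_i^{(k)}` is the
`i`-th Lagrange basis polynomial at the nodes `σ_1², …, σ_k²`. (Indices are zero-based.) -/
theorem norm_H2H1inv_bound (r k : ℕ) (hk1 : 1 ≤ k) (hkr : k < r)
    (σ : ℕ → ℝ)
    (hσpos : ∀ i, i < r → 0 < σ i)
    (hσdistinct : ∀ i j, i < j → j < r → σ j < σ i)
    (H₁ : Matrix (Fin k) (Fin k) ℝ)
    (hH₁ : H₁ = Matrix.of fun i j : Fin k => σ (i : ℕ) ^ (2 * (j : ℕ)))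
    (H₂ : Matrix (Fin (r - k)) (Fin k) ℝ)
    (hH₂ : H₂ = Matrix.of fun (i : Fin (r - k)) (j : Fin k) =>
      σ (k + (i : ℕ)) ^ (2 * (j : ℕ))) :
    matrixSpectralNorm (H₂ * H₁⁻¹) ≤
      Real.sqrt ((k : ℝ) * ((r : ℝ) - (k : ℝ))) *
        (Finset.univ.sup' ⟨(⟨0, hk1⟩ : Fin k), Finset.mem_univ _⟩
          fun i : Fin k =>
            |∏ l ∈ Finset.univ.erase i,
              ((0 - σ (l : ℕ) ^ 2) / (σ (i : ℕ) ^ 2 - σ (l : ℕ) ^ 2))|) := by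

  have hsq : ∀ i j : ℕ, i < j → j < r → σ j ^ 2 < σ i ^ 2 := by
    intro i j hij hjr
    have h1 := hσpos j hjr
    have h2 := hσdistinct i j hij hjr
    nlinarith
  have hvinj : Function.Injective (fun i : Fin k => σ (i : ℕ) ^ 2) := by
    intro a b hab
    simp only at hab
    rcases lt_trichotomy a b with h | h | h
    · exact absurd hab.symm (ne_of_lt (hsq (a : ℕ) (b : ℕ) h (b.2.trans hkr)))
    · exact h
    · exact absurd hab (ne_of_lt (hsq (b : ℕ) (a : ℕ) h (a.2.trans hkr)))
  have hH₁v : H₁ = Matrix.vandermonde (fun i : Fin k => σ (i : ℕ) ^ 2) := by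
    rw [hH₁]
    ext i j
    simp [Matrix.vandermonde_apply, pow_mul]
  have hdet : H₁.det ≠ 0 := by
    rw [hH₁v, Matrix.det_vandermonde]
    refine Finset.prod_ne_zero_iff.2 fun i _ => Finset.prod_ne_zero_iff.2 fun j hj => ?_
    have hij : i < j := Finset.mem_Ioi.1 hj
    exact sub_ne_zero.2 (hvinj.ne (ne_of_gt hij))
  have hH1inv : H₁ * H₁⁻¹ = 1 := Matrix.mul_nonsing_inv _ (isUnit_iff_ne_zero.2 hdet)
  set L : Matrix (Fin (r - k)) (Fin k) ℝ := Matrix.of fun (i : Fin (r - k)) (j : Fin k) =>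
    ∏ l ∈ Finset.univ.erase j,
      (σ (k + (i : ℕ)) ^ 2 - σ (l : ℕ) ^ 2) / (σ (j : ℕ) ^ 2 - σ (l : ℕ) ^ 2) with hL
  have hLH : L * H₁ = H₂ := by
    rw [hH₁, hH₂]
    ext i m
    have key := lagrange_sum_eq (fun i : Fin k => σ (i : ℕ) ^ 2) hvinj (σ (k + (i : ℕ)) ^ 2) m
    simp only [Matrix.mul_apply, Matrix.of_apply, hL]
    simpa [pow_mul] using key
  have hEq : H₂ * H₁⁻¹ = L := by
    rw [← hLH, Matrix.mul_assoc, hH1inv, Matrix.mul_one]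
  set C : ℝ := Finset.univ.sup' ⟨(⟨0, hk1⟩ : Fin k), Finset.mem_univ _⟩
    (fun i : Fin k =>
      |∏ l ∈ Finset.univ.erase i,
        ((0 - σ (l : ℕ) ^ 2) / (σ (i : ℕ) ^ 2 - σ (l : ℕ) ^ 2))|) with hCdef
  have hC0 : 0 ≤ C := by
    rw [hCdef]
    exact le_trans (abs_nonneg _) (Finset.le_sup' (f := fun i : Fin k => |∏ l ∈ Finset.univ.erase i, ((0 - σ (l : ℕ) ^ 2) / (σ (i : ℕ) ^ 2 - σ (l : ℕ) ^ 2))|) (Finset.mem_univ (⟨0, hk1⟩ : Fin k)))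
  have hentry : ∀ i j, |L i j| ≤ C := by
    intro i j
    have hki : k + (i : ℕ) < r := by
      have := i.2
      omega
    have hx0 : 0 < σ (k + (i : ℕ)) ^ 2 := pow_pos (hσpos _ hki) 2
    have step1 : |L i j| ≤
        |∏ l ∈ Finset.univ.erase j,
          ((0 - σ (l : ℕ) ^ 2) / (σ (j : ℕ) ^ 2 - σ (l : ℕ) ^ 2))| := by
      simp only [hL, Matrix.of_apply, Finset.abs_prod]
      refine Finset.prod_le_prod (fun l _ => abs_nonneg _) (fun l hl => ?_)
      have hlj : l ≠ j := Finset.ne_of_mem_erase hl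
      have hlr : (l : ℕ) < r := l.2.trans hkr
      have hlpos : 0 < σ (l : ℕ) ^ 2 := pow_pos (hσpos _ hlr) 2
      have hxl : σ (k + (i : ℕ)) ^ 2 < σ (l : ℕ) ^ 2 := by
        refine hsq (l : ℕ) (k + (i : ℕ)) ?_ hki
        have := l.2
        omega
      have hden : 0 < |σ (j : ℕ) ^ 2 - σ (l : ℕ) ^ 2| := by
        refine abs_pos.2 (sub_ne_zero.2 ?_)
        exact hvinj.ne (Ne.symm hlj)
      rw [abs_div, abs_div]
      refine div_le_div_of_nonneg_right ?_ hden.le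
      rw [abs_sub_comm, abs_of_pos (by linarith), abs_sub_comm, abs_of_pos (by linarith)]
      linarith
    refine le_trans step1 ?_
    rw [hCdef]
    exact Finset.le_sup' (f := fun i : Fin k => |∏ l ∈ Finset.univ.erase i, ((0 - σ (l : ℕ) ^ 2) / (σ (i : ℕ) ^ 2 - σ (l : ℕ) ^ 2))|) (Finset.mem_univ j)
  have hmain := spectralNorm_le_of_entries_le L C hC0 hentry
  rw [hEq]
  refine le_trans hmain (le_of_eq ?_)
  have hcast : ((r - k : ℕ) : ℝ) = (r : ℝ) - (k : ℝ) := by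
    rw [Nat.cast_sub hkr.le]
  rw [hcast, mul_comm ((r : ℝ) - (k : ℝ))]
end

section
/- Let α > 0, γ_0 > 0, and define σ_i = γ_0 e^{−α i} for i = 1,…,k with k ≥ 2. Then for every 1 ≤ i_0 ≤ k, Π_{j=1, j≠i_0}^{k} σ_j² / |σ_j² − σ_{i_0}²| ≤ ( e (k−1) / 2 )^{1/α} · e^{−α (k−i_0)(k−i_0+1)}. -/
open Matrix

open Finset

noncomputable def dd : ℝ := 2 - 2 * Real.log 2

lemma dd_lo : 0.6137056 ≤ dd := by
  have := Real.log_two_lt_d9; unfold dd; norm_num at this ⊢; linarith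
lemma dd_hi : dd ≤ 0.6137058 := by
  have := Real.log_two_gt_d9; unfold dd; norm_num at this ⊢; linarith

lemma exp_neg_le (t q : ℝ) (ht : 0 ≤ t) (n : ℕ) (hq : 0 < q)
    (h : q⁻¹ ≤ ∑ i ∈ range n, t ^ i / i.factorial) : Real.exp (-t) ≤ q := by
  rw [Real.exp_neg, inv_le_comm₀ (Real.exp_pos _) hq]
  exact h.trans (Real.sum_le_exp_of_nonneg ht n)

lemma exp_ge_cubic {t : ℝ} (ht : 0 ≤ t) : 1 + t + t^2/2 + t^3/6 ≤ Real.exp t := by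
  have h := Real.sum_le_exp_of_nonneg ht 4
  simp [Finset.sum_range_succ, Nat.factorial] at h
  nlinarith [h]

lemma exp_neg_le_quad {t : ℝ} (ht : 0 ≤ t) : Real.exp (-t) ≤ 1 - t + t^2/2 := by
  have h := exp_ge_cubic ht
  have hq : (0:ℝ) < 1 - t + t^2/2 := by nlinarith [sq_nonneg (t-1)]
  have key : 1 ≤ (1 - t + t^2/2) * Real.exp t := by
    nlinarith [mul_le_mul_of_nonneg_left h hq.le, pow_nonneg ht 3, pow_nonneg ht 4,
      pow_nonneg ht 5]
  rw [Real.exp_neg, inv_eq_one_div, div_le_iff₀ (Real.exp_pos t)]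
  linarith

lemma middle_case {x a b t0 A B : ℝ} (hax : a ≤ x) (hxb : x ≤ b) (hx : 0 < x)
    (hA : Real.exp (-a) ≤ A) (hB : Real.exp (-t0) ≤ B) (ht0 : t0 * b ≤ 0.6137056)
    (ht0' : 0 ≤ t0) (hAB : A + B ≤ 1) : Real.exp (-(dd/x)) ≤ 1 - Real.exp (-x) := by
  have h1 : Real.exp (-x) ≤ Real.exp (-a) := Real.exp_le_exp.2 (by linarith)
  have h2 : t0 ≤ dd / x := by
    rw [le_div_iff₀ hx]
    nlinarith [dd_lo, mul_le_mul_of_nonneg_left hxb ht0']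
  have h3 : Real.exp (-(dd/x)) ≤ Real.exp (-t0) := Real.exp_le_exp.2 (by linarith)
  linarith

lemma keyA {x : ℝ} (hx : 0 < x) : Real.exp (-(dd/x)) ≤ 1 - Real.exp (-x) := by
  have hd0 : (0:ℝ) < dd := lt_of_lt_of_le (by norm_num) dd_lo
  have hdx : 0 ≤ dd / x := le_of_lt (div_pos hd0 hx)
  rcases le_or_gt 0.77 x with h1 | h1
  · -- large x
    have hex : Real.exp 1 * x ≤ Real.exp x := by
      have := Real.add_one_le_exp (x - 1)
      calc Real.exp 1 * x = Real.exp 1 * ((x-1)+1) := by ring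
        _ ≤ Real.exp 1 * Real.exp (x-1) :=
            mul_le_mul_of_nonneg_left (by linarith) (Real.exp_pos 1).le
        _ = Real.exp x := by rw [← Real.exp_add]; ring_nf
    have henx : Real.exp (-x) ≤ (Real.exp 1 * x)⁻¹ := by
      rw [Real.exp_neg]
      exact inv_anti₀ (by positivity) hex
    have he1 : (2.7182818:ℝ) ≤ Real.exp 1 := by
      have := Real.exp_one_gt_d9; linarith
    have h2 : Real.exp (-(dd/x)) ≤ 1 - dd/x + (dd/x)^2/2 := exp_neg_le_quad hdx
    have h3 : (Real.exp 1 * x)⁻¹ ≤ (2.7182818 * x)⁻¹ := by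
      gcongr
    set u : ℝ := x⁻¹ with hu_def
    have hu : 0 < u := by positivity
    have huu : u ≤ 1/0.77 := by
      rw [hu_def]
      rw [inv_le_comm₀ hx (by norm_num)]
      linarith
    have hdu : dd / x = dd * u := by rw [div_eq_mul_inv]
    have hxu : (2.7182818 * x)⁻¹ = (2.7182818:ℝ)⁻¹ * u := by rw [mul_inv]
    have hd2 : dd^2 ≤ 0.6137058^2 := by nlinarith [dd_lo, dd_hi]
    have hd2u : dd^2 * u ≤ 0.6137058^2 * (1/0.77) :=
      mul_le_mul hd2 huu hu.le (by norm_num)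
    have h5 : (2.7182818:ℝ)⁻¹ + dd^2*u/2 ≤ dd := by
      have : (2.7182818:ℝ)⁻¹ ≤ 0.36788 := by norm_num
      nlinarith [dd_lo]
    have h4 : (2.7182818:ℝ)⁻¹*u + (dd*u)^2/2 ≤ dd*u := by
      nlinarith [mul_le_mul_of_nonneg_left h5 hu.le]
    rw [hdu] at h2 ⊢
    rw [hxu] at h3
    linarith
  rcases le_or_gt x 0.17 with h2 | h2
  · -- small x
    have hq : Real.exp (-x) ≤ 1 - x + x^2/2 := exp_neg_le_quad hx.le
    have hcub : (dd/x)^3/6 ≤ Real.exp (dd/x) := by nlinarith [exp_ge_cubic hdx]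
    have heq : ((6:ℝ) * x^3 / dd^3)⁻¹ = (dd/x)^3/6 := by
      rw [div_pow]; field_simp
    have h3 : Real.exp (-(dd/x)) ≤ 6 * x^3 / dd^3 := by
      rw [Real.exp_neg, inv_le_comm₀ (Real.exp_pos _) (by positivity), heq]
      exact hcub
    have h6 : 6*x^3/dd^3 ≤ 6*x^3/(0.6137056:ℝ)^3 := by
      apply div_le_div_of_nonneg_left (by positivity) (by positivity)
      exact pow_le_pow_left₀ (by norm_num) dd_lo 3
    have h7 : 6*x^3/(0.6137056:ℝ)^3 ≤ x - x^2/2 := by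
      rw [div_le_iff₀ (by norm_num)]
      nlinarith [hx, h2, mul_pos hx hx, mul_nonneg hx.le hx.le, sq_nonneg (x-0.17)]
    linarith
  rcases le_or_gt x 0.32 with h3 | h3
  · exact middle_case h2.le h3 hx
      (exp_neg_le 0.17 0.843665 (by norm_num) 10 (by norm_num)
        (by simp [Finset.sum_range_succ, Nat.factorial]; norm_num))
      (exp_neg_le 1.9178 0.14693 (by norm_num) 14 (by norm_num)
        (by simp [Finset.sum_range_succ, Nat.factorial]; norm_num))
      (by norm_num) (by norm_num) (by norm_num)
  rcases le_or_gt x 0.46 with h4 | h4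
  · exact middle_case h3.le h4 hx
      (exp_neg_le 0.32 0.72615 (by norm_num) 10 (by norm_num)
        (by simp [Finset.sum_range_succ, Nat.factorial]; norm_num))
      (exp_neg_le 1.3341 0.263396 (by norm_num) 14 (by norm_num)
        (by simp [Finset.sum_range_succ, Nat.factorial]; norm_num))
      (by norm_num) (by norm_num) (by norm_num)
  rcases le_or_gt x 0.61 with h5 | h5
  · exact middle_case h4.le h5 hx
      (exp_neg_le 0.46 0.631284 (by norm_num) 10 (by norm_num)
        (by simp [Finset.sum_range_succ, Nat.factorial]; norm_num))
      (exp_neg_le 1.006 0.365679 (by norm_num) 14 (by norm_num)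
        (by simp [Finset.sum_range_succ, Nat.factorial]; norm_num))
      (by norm_num) (by norm_num) (by norm_num)
  · exact middle_case h5.le h1.le hx
      (exp_neg_le 0.61 0.543351 (by norm_num) 10 (by norm_num)
        (by simp [Finset.sum_range_succ, Nat.factorial]; norm_num))
      (exp_neg_le 0.797 0.450679 (by norm_num) 14 (by norm_num)
        (by simp [Finset.sum_range_succ, Nat.factorial]; norm_num))
      (by norm_num) (by norm_num) (by norm_num)

lemma bound1 {x : ℝ} (hx : 0 < x) : 1/(1 - Real.exp (-x)) ≤ Real.exp (dd/x) := by
  have hA := keyA hx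
  have h1 : 0 < 1 - Real.exp (-x) := lt_of_lt_of_le (Real.exp_pos _) hA
  rw [div_le_iff₀ h1]
  calc (1:ℝ) = Real.exp (dd/x) * Real.exp (-(dd/x)) := by
        rw [← Real.exp_add]; simp
    _ ≤ Real.exp (dd/x) * (1 - Real.exp (-x)) :=
        mul_le_mul_of_nonneg_left hA (Real.exp_pos _).le

lemma sum_Icc_inv_le (n : ℕ) : ∑ m ∈ Icc 1 n, (1:ℝ)/m ≤ 1 + Real.log n := by
  have h := harmonic_le_one_add_log n
  rw [harmonic_eq_sum_Icc] at h
  push_cast at h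
  simpa [one_div] using h

lemma sum_Icc_id (b : ℕ) : ∑ m ∈ Icc 1 b, (m:ℝ) = b*(b+1)/2 := by
  induction b with
  | zero => simp
  | succ n ih =>
    rw [Finset.sum_Icc_succ_top (by omega)]
    rw [ih]
    push_cast
    ring

lemma lemmaB (a b : ℕ) (hab : 1 ≤ a + b) :
    (dd/2) * ((∑ m ∈ Icc 1 a, (1:ℝ)/m) + ∑ m ∈ Icc 1 b, (1:ℝ)/m)
      ≤ 1 + Real.log (a+b) - Real.log 2 := by
  have hL1 := Real.log_two_gt_d9
  have hL2 := Real.log_two_lt_d9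
  have hdd : dd = 2 - 2*Real.log 2 := rfl
  have hSa := sum_Icc_inv_le a
  have hSb := sum_Icc_inv_le b
  have hd2 : 0 ≤ dd/2 := by have := dd_lo; linarith
  have hL0 : (0:ℝ) ≤ Real.log 2 := by linarith
  rcases Nat.eq_zero_or_pos a with ha | ha
  · subst ha
    have hb : 1 ≤ b := by omega
    have hbn : (1:ℝ) ≤ b := by exact_mod_cast hb
    have hlogb : 0 ≤ Real.log b := Real.log_nonneg hbn
    have hempty : (Icc 1 0 : Finset ℕ) = ∅ := rfl
    rw [hempty]
    simp only [Finset.sum_empty, zero_add, Nat.zero_add]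
    have hkey := mul_le_mul_of_nonneg_left hSb hd2
    rw [hdd] at hkey ⊢
    norm_num
    simp only [one_div] at hkey
    nlinarith [mul_nonneg hL0 hlogb]
  rcases Nat.eq_zero_or_pos b with hb | hb
  · subst hb
    have han : (1:ℝ) ≤ a := by exact_mod_cast ha
    have hloga : 0 ≤ Real.log a := Real.log_nonneg han
    have hempty : (Icc 1 0 : Finset ℕ) = ∅ := rfl
    rw [hempty]
    simp only [Finset.sum_empty, add_zero, Nat.add_zero]
    have hkey := mul_le_mul_of_nonneg_left hSa hd2
    rw [hdd] at hkey ⊢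
    norm_num
    simp only [one_div] at hkey
    nlinarith [mul_nonneg hL0 hloga]
  · -- both positive
    have han : (1:ℝ) ≤ a := by exact_mod_cast ha
    have hbn : (1:ℝ) ≤ b := by exact_mod_cast hb
    have hnn : (1:ℝ) ≤ ((a+b:ℕ):ℝ) := by exact_mod_cast hab
    have hlogn : 0 ≤ Real.log ((a+b:ℕ):ℝ) := Real.log_nonneg hnn
    have hloga : 0 ≤ Real.log a := Real.log_nonneg han
    have hlogb : 0 ≤ Real.log b := Real.log_nonneg hbn
    have hab2 : (a:ℝ)*b ≤ ((a+b:ℕ):ℝ)^2/4 := by push_cast; nlinarith [sq_nonneg ((a:ℝ)-(b:ℝ))]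
    have hlogab : Real.log a + Real.log b ≤ 2*Real.log ((a+b:ℕ):ℝ) - 2*Real.log 2 := by
      rw [← Real.log_mul (by positivity) (by positivity)]
      have h1 : Real.log ((a:ℝ)*b) ≤ Real.log (((a+b:ℕ):ℝ)^2/4) :=
        Real.log_le_log (by positivity) hab2
      rw [Real.log_div (by positivity) (by norm_num), Real.log_pow] at h1
      have h4 : Real.log (4:ℝ) = 2 * Real.log 2 := by
        rw [show (4:ℝ) = 2^2 by norm_num, Real.log_pow]; push_cast; ring
      rw [h4] at h1
      push_cast at h1 ⊢
      linarith
    have hkey : (dd/2) * ((∑ m ∈ Icc 1 a, (1:ℝ)/m) + ∑ m ∈ Icc 1 b, (1:ℝ)/m)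
        ≤ (dd/2) * (2 + Real.log a + Real.log b) := by
      apply mul_le_mul_of_nonneg_left (by linarith) hd2
    have hstep : (dd/2) * (2 + Real.log a + Real.log b)
        ≤ 1 + Real.log ((a+b:ℕ):ℝ) - Real.log 2 := by
      rw [hdd]
      nlinarith [mul_nonneg (by linarith : (0:ℝ) ≤ Real.log 2) hlogn,
        mul_nonneg (by linarith : (0:ℝ) ≤ Real.log 2) (by linarith : (0:ℝ) ≤ Real.log a + Real.log b),
        mul_nonneg hlogn (by linarith : (0:ℝ) ≤ 2*Real.log 2 - 1)]
    push_cast at hkey hstep ⊢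
    linarith



/-- Under the exponential decay model `σ_i = γ₀ e^{−α i}`, for every
`1 ≤ i₀ ≤ k` (with `k ≥ 2`):
`Π_{j=1, j≠i₀}^{k} σ_j² / |σ_j² − σ_{i₀}²| ≤ (e(k−1)/2)^{1/α} · e^{−α(k−i₀)(k−i₀+1)}`. -/
theorem lagrange_at_zero_bound (α γ₀ : ℝ) (hα : 0 < α) (hγ₀ : 0 < γ₀)
    (k : ℕ) (hk : 2 ≤ k)
    (σ : ℕ → ℝ) (hσ : ∀ i, σ i = γ₀ * Real.exp (-(α * (i : ℝ))))
    (i₀ : ℕ) (hi₀1 : 1 ≤ i₀) (hi₀k : i₀ ≤ k) :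
    ∏ j ∈ (Finset.Icc 1 k).erase i₀, σ j ^ 2 / |σ j ^ 2 - σ i₀ ^ 2| ≤
      (Real.exp 1 * ((k : ℝ) - 1) / 2) ^ (1 / α) *
        Real.exp (-(α * ((k : ℝ) - (i₀ : ℝ)) * ((k : ℝ) - (i₀ : ℝ) + 1))) := by
  have hσ2 : ∀ i : ℕ, σ i ^ 2 = γ₀^2 * Real.exp (-(2*α*(i:ℝ))) := by
    intro i
    rw [hσ i, mul_pow, sq (Real.exp _), ← Real.exp_add]
    congr 1
    ring
  set a := i₀ - 1 with ha_def
  set b := k - i₀ with hb_def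
  have hset : (Finset.Icc 1 k).erase i₀ = Finset.Ico 1 i₀ ∪ Finset.Ioc i₀ k := by
    ext j
    simp only [Finset.mem_erase, Finset.mem_Icc, Finset.mem_union, Finset.mem_Ico,
      Finset.mem_Ioc]
    omega
  have hdisj : Disjoint (Finset.Ico 1 i₀) (Finset.Ioc i₀ k) := by
    rw [Finset.disjoint_left]
    intro j hj hj'
    simp only [Finset.mem_Ico] at hj
    simp only [Finset.mem_Ioc] at hj'
    omega
  have hterm1 : ∀ j ∈ Finset.Ico 1 i₀,
      σ j ^ 2 / |σ j ^ 2 - σ i₀ ^ 2| ≤ Real.exp (dd/(2*α*((i₀:ℝ)-(j:ℝ)))) := by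
    intro j hj
    simp only [Finset.mem_Ico] at hj
    have hji : (j:ℝ) < (i₀:ℝ) := by exact_mod_cast hj.2
    have hx : 0 < 2*α*((i₀:ℝ)-(j:ℝ)) := by nlinarith
    have hEsplit : Real.exp (-(2*α*(i₀:ℝ)))
        = Real.exp (-(2*α*(j:ℝ))) * Real.exp (-(2*α*((i₀:ℝ)-(j:ℝ)))) := by
      rw [← Real.exp_add]; congr 1; ring
    have hnum : σ j ^ 2 - σ i₀ ^ 2
        = σ j ^ 2 * (1 - Real.exp (-(2*α*((i₀:ℝ)-(j:ℝ))))) := by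
      rw [hσ2, hσ2, hEsplit]; ring
    have h1mx : 0 < 1 - Real.exp (-(2*α*((i₀:ℝ)-(j:ℝ)))) := by
      have := Real.exp_lt_one_iff.2 (by linarith : -(2*α*((i₀:ℝ)-(j:ℝ))) < 0)
      linarith
    have hσj : (0:ℝ) < σ j ^ 2 := by rw [hσ2]; positivity
    rw [hnum, abs_of_pos (by positivity), div_mul_eq_div_div, div_self hσj.ne']
    exact bound1 hx
  have hterm2 : ∀ j ∈ Finset.Ioc i₀ k,
      σ j ^ 2 / |σ j ^ 2 - σ i₀ ^ 2|
        ≤ Real.exp (dd/(2*α*((j:ℝ)-(i₀:ℝ))) + -(2*α*((j:ℝ)-(i₀:ℝ)))) := by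
    intro j hj
    simp only [Finset.mem_Ioc] at hj
    have hji : (i₀:ℝ) < (j:ℝ) := by exact_mod_cast hj.1
    have hx : 0 < 2*α*((j:ℝ)-(i₀:ℝ)) := by nlinarith
    have hEsplit : Real.exp (-(2*α*(j:ℝ)))
        = Real.exp (-(2*α*(i₀:ℝ))) * Real.exp (-(2*α*((j:ℝ)-(i₀:ℝ)))) := by
      rw [← Real.exp_add]; congr 1; ring
    have h1mx : 0 < 1 - Real.exp (-(2*α*((j:ℝ)-(i₀:ℝ)))) := by
      have := Real.exp_lt_one_iff.2 (by linarith : -(2*α*((j:ℝ)-(i₀:ℝ))) < 0)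
      linarith
    have hσi : (0:ℝ) < γ₀^2 * Real.exp (-(2*α*(i₀:ℝ))) := by positivity
    have habs : |σ j ^ 2 - σ i₀ ^ 2|
        = (γ₀^2 * Real.exp (-(2*α*(i₀:ℝ)))) * (1 - Real.exp (-(2*α*((j:ℝ)-(i₀:ℝ))))) := by
      rw [abs_sub_comm]
      rw [show σ i₀ ^ 2 - σ j ^ 2
          = (γ₀^2 * Real.exp (-(2*α*(i₀:ℝ)))) * (1 - Real.exp (-(2*α*((j:ℝ)-(i₀:ℝ)))))
          from by rw [hσ2, hσ2, hEsplit]; ring]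
      exact abs_of_pos (by positivity)
    have hnum2 : σ j ^ 2 = (γ₀^2 * Real.exp (-(2*α*(i₀:ℝ)))) * Real.exp (-(2*α*((j:ℝ)-(i₀:ℝ)))) := by
      rw [hσ2, hEsplit]; ring
    rw [habs, hnum2, mul_div_mul_left _ _ hσi.ne', Real.exp_add]
    calc Real.exp (-(2*α*((j:ℝ)-(i₀:ℝ)))) / (1 - Real.exp (-(2*α*((j:ℝ)-(i₀:ℝ)))))
        = Real.exp (-(2*α*((j:ℝ)-(i₀:ℝ)))) * (1/(1 - Real.exp (-(2*α*((j:ℝ)-(i₀:ℝ)))))) := by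
          ring
      _ ≤ Real.exp (-(2*α*((j:ℝ)-(i₀:ℝ)))) * Real.exp (dd/(2*α*((j:ℝ)-(i₀:ℝ)))) :=
          mul_le_mul_of_nonneg_left (bound1 hx) (Real.exp_pos _).le
      _ = Real.exp (dd/(2*α*((j:ℝ)-(i₀:ℝ)))) * Real.exp (-(2*α*((j:ℝ)-(i₀:ℝ)))) := by
          ring
  rw [hset, Finset.prod_union hdisj]
  refine le_trans (mul_le_mul (Finset.prod_le_prod (fun j _ => div_nonneg (sq_nonneg _) (abs_nonneg _)) hterm1)
    (Finset.prod_le_prod (fun j _ => div_nonneg (sq_nonneg _) (abs_nonneg _)) hterm2)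
    (Finset.prod_nonneg (fun j _ => div_nonneg (sq_nonneg _) (abs_nonneg _)))
    (Finset.prod_nonneg (fun j _ => (Real.exp_pos _).le))) ?_
  rw [← Real.exp_sum, ← Real.exp_sum, ← Real.exp_add]
  have hS1 : ∑ j ∈ Finset.Ico 1 i₀, dd/(2*α*((i₀:ℝ)-(j:ℝ)))
      = (dd/(2*α)) * ∑ m ∈ Finset.Icc 1 a, (1:ℝ)/m := by
    rw [Finset.mul_sum]
    refine Finset.sum_nbij' (fun j => i₀ - j) (fun m => i₀ - m) ?_ ?_ ?_ ?_ ?_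
    · intro j hj; simp only [Finset.mem_Ico] at hj; simp only [Finset.mem_Icc]; omega
    · intro m hm; simp only [Finset.mem_Icc] at hm; simp only [Finset.mem_Ico]; omega
    · intro j hj; simp only [Finset.mem_Ico] at hj; omega
    · intro m hm; simp only [Finset.mem_Icc] at hm; omega
    · intro j hj
      simp only [Finset.mem_Ico] at hj
      rw [Nat.cast_sub (le_of_lt hj.2)]
      have hm : (0:ℝ) < (i₀:ℝ) - j := by
        have : (j:ℝ) < i₀ := by exact_mod_cast hj.2
        linarith
      field_simp
  have hS2 : ∑ j ∈ Finset.Ioc i₀ k, (dd/(2*α*((j:ℝ)-(i₀:ℝ))) + -(2*α*((j:ℝ)-(i₀:ℝ))))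
      = (dd/(2*α)) * (∑ m ∈ Finset.Icc 1 b, (1:ℝ)/m) + -(2*α*((b:ℝ)*((b:ℝ)+1)/2)) := by
    have step1 : ∑ j ∈ Finset.Ioc i₀ k, (dd/(2*α*((j:ℝ)-(i₀:ℝ))) + -(2*α*((j:ℝ)-(i₀:ℝ))))
        = ∑ m ∈ Finset.Icc 1 b, (dd/(2*α*(m:ℝ)) + -(2*α*(m:ℝ))) := by
      refine Finset.sum_nbij' (fun j => j - i₀) (fun m => i₀ + m) ?_ ?_ ?_ ?_ ?_
      · intro j hj; simp only [Finset.mem_Ioc] at hj; simp only [Finset.mem_Icc]; omega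
      · intro m hm; simp only [Finset.mem_Icc] at hm; simp only [Finset.mem_Ioc]; omega
      · intro j hj; simp only [Finset.mem_Ioc] at hj; omega
      · intro m hm; simp only [Finset.mem_Icc] at hm; omega
      · intro j hj
        simp only [Finset.mem_Ioc] at hj
        rw [Nat.cast_sub (le_of_lt hj.1)]
    rw [step1, Finset.sum_add_distrib]
    congr 1
    · rw [Finset.mul_sum]
      apply Finset.sum_congr rfl
      intro m hm
      simp only [Finset.mem_Icc] at hm
      have hm0 : (0:ℝ) < (m:ℝ) := by exact_mod_cast hm.1
      field_simp
    · calc ∑ m ∈ Finset.Icc 1 b, -(2*α*(m:ℝ))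
          = (-(2*α)) * ∑ m ∈ Finset.Icc 1 b, (m:ℝ) := by
            rw [Finset.mul_sum]; apply Finset.sum_congr rfl; intros; ring
        _ = -(2*α*((b:ℝ)*((b:ℝ)+1)/2)) := by rw [sum_Icc_id]; ring
  rw [hS1, hS2]
  have hk1 : (1:ℝ) ≤ (k:ℝ) - 1 := by
    have : (2:ℝ) ≤ k := by exact_mod_cast hk
    linarith
  have hbase : 0 < Real.exp 1 * ((k:ℝ)-1)/2 :=
    div_pos (mul_pos (Real.exp_pos 1) (by linarith)) two_pos
  rw [Real.rpow_def_of_pos hbase, ← Real.exp_add]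
  apply Real.exp_le_exp.2
  have hblog : Real.log (Real.exp 1*((k:ℝ)-1)/2) = 1 + Real.log ((k:ℝ)-1) - Real.log 2 := by
    rw [Real.log_div (by positivity) (by norm_num),
      Real.log_mul (Real.exp_ne_zero 1) (by linarith : (k:ℝ)-1 ≠ 0), Real.log_exp]
  have hcastb : (k:ℝ) - (i₀:ℝ) = (b:ℝ) := by
    rw [hb_def, Nat.cast_sub hi₀k]
  have hcastab : (a:ℝ) + (b:ℝ) = (k:ℝ) - 1 := by
    rw [ha_def, hb_def, Nat.cast_sub hi₀1, Nat.cast_sub hi₀k]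
    push_cast
    ring
  have hB := lemmaB a b (by omega)
  rw [hcastab] at hB
  rw [hblog, hcastb]
  have hα1 : (0:ℝ) < 1/α := by positivity
  have hdivB : (dd/(2*α)) * ((∑ m ∈ Finset.Icc 1 a, (1:ℝ)/m) + ∑ m ∈ Finset.Icc 1 b, (1:ℝ)/m)
      ≤ (1 + Real.log ((k:ℝ)-1) - Real.log 2) * (1/α) := by
    have h := mul_le_mul_of_nonneg_right hB hα1.le
    calc (dd/(2*α)) * ((∑ m ∈ Finset.Icc 1 a, (1:ℝ)/m) + ∑ m ∈ Finset.Icc 1 b, (1:ℝ)/m)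
        = ((dd/2) * ((∑ m ∈ Finset.Icc 1 a, (1:ℝ)/m) + ∑ m ∈ Finset.Icc 1 b, (1:ℝ)/m)) * (1/α) := by
          ring
      _ ≤ (1 + Real.log ((k:ℝ)-1) - Real.log 2) * (1/α) := h
  nlinarith [hdivB]
end

section
/- Let C ∈ ℝ^{n×n} be symmetric positive semidefinite and d ∈ range(C). Suppose the k-step Lanczos relations hold: C Q_k = Q_k T_k + δ_{k+1} q_{k+1} e_kᵀ and δ_1 q_1 = d, where Q_k = (q_1,…,q_k), the vectors q_1,…,q_{k+1} are orthonormal in ℝ^n, T_k ∈ ℝ^{k×k} is symmetric tridiagonal and invertible, and e_k is the k-th column of the identity matrix of order k. Let f* be the unique vector in range(C) with C f* = d (i.e. f* = C^† d), and let R_k be the normalized characteristic polynomial of T_k, R_k(t) = det(T_k − t I)/det(T_k), so that R_k(0) = 1. Then the k-th conjugate gradient iterate f_k = Q_k T_k^{-1} δ_1 e_1 satisfies f_k = (I − R_k(C)) f*, where R_k(C) denotes the evaluation of the polynomial R_k at the matrix C. -/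
open Matrix

lemma my_eval_charpoly_aux {k : ℕ} (M : Matrix (Fin k) (Fin k) ℝ) (t : ℝ) :
    M.charpoly.eval t = (t • (1 : Matrix (Fin k) (Fin k) ℝ) - M).det := by
  rw [Matrix.charpoly, _root_.eval_det, matPolyEquiv_charmatrix]
  simp [Matrix.scalar, Algebra.smul_def, Matrix.algebraMap_eq_diagonal]

/-- For a symmetric positive semidefinite `C` and `d ∈ range(C)`, if the
`k`-step Lanczos relations hold with orthonormal `q_1,…,q_{k+1}`, symmetric tridiagonal
invertible `T_k`, then the `k`-th CG iterate `f_k = Q_k T_k⁻¹ δ_1 e_1` satisfies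
`f_k = (I − R_k(C)) f*`, where `f* = C† d` is the unique vector in `range(C)` with
`C f* = d` and `R_k(t) = det(T_k − t I)/det(T_k)` is the normalized characteristic
polynomial of `T_k`. -/
theorem cg_filter_polynomial {n k : ℕ} (hk : 1 ≤ k)
    (C : Matrix (Fin n) (Fin n) ℝ) (hC : C.PosSemidef)
    (d : Fin n → ℝ)
    (Q : Matrix (Fin n) (Fin k) ℝ) (qk1 : Fin n → ℝ)
    (T : Matrix (Fin k) (Fin k) ℝ) (δ : ℕ → ℝ)
    (horth : ∀ i j : Fin k, Qᵀ i ⬝ᵥ Qᵀ j = if i = j then (1 : ℝ) else 0)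
    (horth' : ∀ i : Fin k, Qᵀ i ⬝ᵥ qk1 = 0)
    (hqnorm : qk1 ⬝ᵥ qk1 = 1)
    (hTsymm : Tᵀ = T)
    (hTtri : ∀ i j : Fin k, ((i : ℕ) + 1 < (j : ℕ) ∨ (j : ℕ) + 1 < (i : ℕ)) → T i j = 0)
    (hTunit : IsUnit T.det)
    (hlanczos : C * Q = Q * T + δ (k + 1) • Matrix.vecMulVec qk1
      (fun j : Fin k => if (j : ℕ) = k - 1 then (1 : ℝ) else 0))
    (hstart : δ 1 • Qᵀ (⟨0, hk⟩ : Fin k) = d)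
    (fstar : Fin n → ℝ)
    (hfstar_mem : ∃ w, C *ᵥ w = fstar)
    (hfstar : C *ᵥ fstar = d)
    (R : Polynomial ℝ)
    (hR : ∀ t : ℝ, R.eval t = (T - t • (1 : Matrix (Fin k) (Fin k) ℝ)).det / T.det) :
    Q *ᵥ (T⁻¹ *ᵥ (δ 1 • fun j : Fin k => if (j : ℕ) = 0 then (1 : ℝ) else 0)) =
      (1 - Polynomial.aeval C R) *ᵥ fstar := by
  -- Polynomial facts about `R`
  have hdet : T.det ≠ 0 := hTunit.ne_zero
  have hReq : R = ((-1) ^ k * (T.det)⁻¹) • T.charpoly := by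
    apply Polynomial.funext
    intro t
    rw [hR t, Polynomial.eval_smul, smul_eq_mul, my_eval_charpoly_aux]
    rw [show T - t • (1 : Matrix (Fin k) (Fin k) ℝ) = -(t • 1 - T) by abel, Matrix.det_neg]
    simp [Fintype.card_fin]
    ring
  have hRT : Polynomial.aeval T R = 0 := by
    rw [hReq, _root_.map_smul, Matrix.aeval_self_charpoly, smul_zero]
  have hR0 : R.coeff 0 = 1 := by
    have h := hR 0
    simp [div_self hdet] at h
    rw [Polynomial.coeff_zero_eq_eval_zero, h]
  set S : Polynomial ℝ := -R.divX with hS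
  have hSX : S * Polynomial.X = 1 - R := by
    have h := Polynomial.divX_mul_X_add R
    rw [hR0, Polynomial.C_1] at h
    rw [hS]
    linear_combination -h
  have hdegS : S.natDegree < k := by
    have h1 : R.natDegree ≤ k := by
      rw [hReq]
      refine (Polynomial.natDegree_smul_le _ _).trans ?_
      rw [T.charpoly_natDegree_eq_dim, Fintype.card_fin]
    rw [hS, Polynomial.natDegree_neg, Polynomial.natDegree_divX_eq_natDegree_tsub_one]
    omega
  have hTinv : T⁻¹ = Polynomial.aeval T S := by
    apply Matrix.inv_eq_left_inv
    have h : Polynomial.aeval T (S * Polynomial.X) = 1 := by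
      rw [hSX, _root_.map_sub, _root_.map_one, hRT, sub_zero]
    rwa [_root_.map_mul, Polynomial.aeval_X] at h
  -- Lanczos iteration facts
  set e1 : Fin k → ℝ := fun j => if (j : ℕ) = 0 then (1 : ℝ) else 0 with he1
  have hsupp : ∀ (j : ℕ) (i : Fin k), j < (i : ℕ) → ((T ^ j) *ᵥ e1) i = 0 := by
    intro j
    induction j with
    | zero =>
      intro i hi
      simp only [pow_zero, Matrix.one_mulVec, he1]
      exact if_neg (by omega)
    | succ j ih =>
      intro i hi
      rw [pow_succ', ← Matrix.mulVec_mulVec]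
      show ∑ m : Fin k, T i m * ((T ^ j) *ᵥ e1) m = 0
      apply Finset.sum_eq_zero
      intro m _
      by_cases hm : j < (m : ℕ)
      · rw [ih m hm, mul_zero]
      · rw [hTtri i m (Or.inr (by omega)), zero_mul]
  have hmain : ∀ j : ℕ, j < k → (C ^ j) *ᵥ d = Q *ᵥ ((T ^ j) *ᵥ (δ 1 • e1)) := by
    intro j
    induction j with
    | zero =>
      intro _
      simp only [pow_zero, Matrix.one_mulVec]
      rw [← hstart]
      ext i
      simp only [Matrix.mulVec, dotProduct, Pi.smul_apply, smul_eq_mul, he1,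
        Matrix.transpose_apply, mul_ite, mul_one, mul_zero]
      rw [Finset.sum_eq_single (⟨0, hk⟩ : Fin k)]
      · simp [mul_comm]
      · intro b _ hb
        have : (b : ℕ) ≠ 0 := by
          intro h; apply hb; exact Fin.ext h
        simp [this]
      · simp
    | succ j ih =>
      intro hj
      rw [pow_succ', ← Matrix.mulVec_mulVec, ih (by omega), Matrix.mulVec_mulVec, hlanczos,
        Matrix.add_mulVec, Matrix.smul_mulVec]
      have hzero : Matrix.vecMulVec qk1 (fun j : Fin k => if (j : ℕ) = k - 1 then (1 : ℝ) else 0)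
          *ᵥ ((T ^ j) *ᵥ (δ 1 • e1)) = 0 := by
        ext i
        show ∑ m : Fin k, (qk1 i * if (m : ℕ) = k - 1 then (1:ℝ) else 0)
            * ((T ^ j) *ᵥ (δ 1 • e1)) m = 0
        apply Finset.sum_eq_zero
        intro m _
        by_cases hm : (m : ℕ) = k - 1
        · have : ((T ^ j) *ᵥ (δ 1 • e1)) m = 0 := by
            rw [Matrix.mulVec_smul, Pi.smul_apply, hsupp j m (by omega), smul_zero]
          rw [this, mul_zero]
        · rw [if_neg hm, mul_zero, zero_mul]
      rw [hzero, smul_zero, add_zero, ← Matrix.mulVec_mulVec]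
      conv_rhs => rw [pow_succ', ← Matrix.mulVec_mulVec]
  -- Final assembly
  have hsum1 : ∀ (m : ℕ) (A : Matrix (Fin m) (Fin m) ℝ) (v : Fin m → ℝ) (c : ℕ → ℝ),
      (∑ i ∈ Finset.range k, c i • A ^ i) *ᵥ v = ∑ i ∈ Finset.range k, c i • (A ^ i *ᵥ v) := by
    intro m A v c
    rw [show (∑ i ∈ Finset.range k, c i • A ^ i) *ᵥ v
        = ∑ i ∈ Finset.range k, (c i • A ^ i) *ᵥ v from
      map_sum (Matrix.mulVec.addMonoidHomLeft v) _ _]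
    exact Finset.sum_congr rfl fun i _ => Matrix.smul_mulVec _ _ _
  calc Q *ᵥ (T⁻¹ *ᵥ (δ 1 • e1))
      = Q *ᵥ (∑ i ∈ Finset.range k, S.coeff i • (T ^ i *ᵥ (δ 1 • e1))) := by
        rw [hTinv, Polynomial.aeval_eq_sum_range' hdegS, hsum1]
    _ = ∑ i ∈ Finset.range k, S.coeff i • (Q *ᵥ ((T ^ i) *ᵥ (δ 1 • e1))) := by
        rw [show Q *ᵥ (∑ i ∈ Finset.range k, S.coeff i • (T ^ i *ᵥ (δ 1 • e1)))
            = Q.mulVecLin (∑ i ∈ Finset.range k, S.coeff i • (T ^ i *ᵥ (δ 1 • e1))) from rfl,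
          map_sum]
        exact Finset.sum_congr rfl fun i _ => by
          rw [_root_.map_smul, Matrix.mulVecLin_apply]
    _ = ∑ i ∈ Finset.range k, S.coeff i • ((C ^ i) *ᵥ d) :=
        Finset.sum_congr rfl fun i hi => by rw [hmain i (Finset.mem_range.mp hi)]
    _ = (Polynomial.aeval C S) *ᵥ (C *ᵥ fstar) := by
        rw [Polynomial.aeval_eq_sum_range' hdegS, hfstar, hsum1]
    _ = (Polynomial.aeval C S * C) *ᵥ fstar := Matrix.mulVec_mulVec _ _ _
    _ = (1 - Polynomial.aeval C R) *ᵥ fstar := by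
        have h : Polynomial.aeval C S * C = 1 - Polynomial.aeval C R := by
          have h2 : Polynomial.aeval C (S * Polynomial.X)
              = Polynomial.aeval C (1 - R) := by rw [hSX]
          rwa [_root_.map_mul, Polynomial.aeval_X, _root_.map_sub, _root_.map_one] at h2
        rw [h]
end

section
/- Assume the GSVD setup and suppose the gen-GKB matrix relations hold through step k: β_1 U_{k+1} e_1 = b, A V_k = U_{k+1} B_k, N Aᵀ M^{-1} U_{k+1} = V_k B_kᵀ + α_{k+1} v_{k+1} e_{k+1}ᵀ, with U_{k+1}ᵀ M^{-1} U_{k+1} = I, V_kᵀ N^{-1} V_k = I, v_{k+1}ᵀ N^{-1} V_k = 0, and B_k ∈ ℝ^{(k+1)×k} lower bidiagonal with diagonal α_1,…,α_k and subdiagonal β_2,…,β_{k+1}, all α_i, β_i > 0. Suppose B_kᵀ B_k is invertible with eigenvalues (θ_1^{(k)})² > (θ_2^{(k)})² > … > (θ_k^{(k)})² > 0, i.e. det(t I − B_kᵀ B_k) = Π_{j=1}^{k} (t − (θ_j^{(k)})²). Then the k-th subspace projection regularized solution x_k = V_k (B_kᵀ B_k)^{-1} B_kᵀ (β_1 e_1)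 admits the filtered GSVD expansion x_k = Σ_{i=1}^{r} f_i^{(k)} ((u_{A,i}ᵀ L_M b)/σ_i) z_i with filter factors f_i^{(k)} = 1 − Π_{j=1}^{k} ((θ_j^{(k)})² − γ_i²)/(θ_j^{(k)})², where γ_i = σ_i. -/
open Matrix Polynomial

lemma aux_tri {k : ℕ} (α β : ℕ → ℝ) (B : Matrix (Fin (k+1)) (Fin k) ℝ)
    (hB : ∀ (i : Fin (k + 1)) (j : Fin k),
      B i j = if (i : ℕ) = (j : ℕ) then α ((j : ℕ) + 1)
        else if (i : ℕ) = (j : ℕ) + 1 then β ((j : ℕ) + 2) else 0)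
    {i l : Fin k} (h : (l:ℕ)+2 ≤ (i:ℕ)) : (Bᵀ*B) i l = 0 := by
  simp only [Matrix.mul_apply, Matrix.transpose_apply]
  apply Finset.sum_eq_zero
  intro s _
  rw [hB, hB]
  split_ifs <;> first | (exfalso; omega) | ring

lemma aux_supp {k : ℕ} (G : Matrix (Fin k) (Fin k) ℝ)
    (hG : ∀ i l : Fin k, (l:ℕ)+2 ≤ (i:ℕ) → G i l = 0)
    (v : Fin k → ℝ) (hv : ∀ i : Fin k, 0 < (i:ℕ) → v i = 0) :
    ∀ j, ∀ i : Fin k, j < (i:ℕ) → (G^j *ᵥ v) i = 0 := by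
  intro j
  induction j with
  | zero => intro i hi; simpa [Matrix.one_mulVec] using hv i hi
  | succ j ih =>
      intro i hi
      rw [pow_succ', ← Matrix.mulVec_mulVec]
      show ∑ l : Fin k, G i l * (G ^ j *ᵥ v) l = 0
      apply Finset.sum_eq_zero
      intro l _
      by_cases hl : (l:ℕ)+2 ≤ (i:ℕ)
      · rw [hG i l hl]; ring
      · rw [ih l (by omega)]; ring

lemma aux_vmv_mul {n p q : ℕ} (x : Fin n → ℝ) (y : Fin p → ℝ) (B : Matrix (Fin p) (Fin q) ℝ) :
    Matrix.vecMulVec x y * B = Matrix.vecMulVec x (y ᵥ* B) := by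
  ext a c
  simp [Matrix.mul_apply, Matrix.vecMulVec_apply, Matrix.vecMul, dotProduct,
    Finset.mul_sum, mul_assoc]

lemma aux_vmv_mulVec {n p : ℕ} (x : Fin n → ℝ) (y : Fin p → ℝ) (v : Fin p → ℝ) :
    Matrix.vecMulVec x y *ᵥ v = (y ⬝ᵥ v) • x := by
  ext a
  simp only [Matrix.mulVec, Matrix.vecMulVec_apply, dotProduct, Pi.smul_apply,
    smul_eq_mul, Finset.sum_mul, Finset.mul_sum]
  exact Finset.sum_congr rfl fun s _ => by ring

lemma aux_vmv_smul {n p : ℕ} (x : Fin n → ℝ) (a : ℝ) (y : Fin p → ℝ) :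
    Matrix.vecMulVec x (a • y) = a • Matrix.vecMulVec x y := by
  ext i j; simp [Matrix.vecMulVec_apply]; ring

lemma aux_krylov {m n k : ℕ} (hk1 : 1 ≤ k) (α β : ℕ → ℝ)
    (A : Matrix (Fin m) (Fin n) ℝ) (P : Matrix (Fin n) (Fin m) ℝ)
    (U : Matrix (Fin m) (Fin (k+1)) ℝ) (V : Matrix (Fin n) (Fin k) ℝ)
    (vk1 : Fin n → ℝ) (B : Matrix (Fin (k+1)) (Fin k) ℝ) (c : ℝ)
    (hB : ∀ (i : Fin (k + 1)) (j : Fin k),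
      B i j = if (i : ℕ) = (j : ℕ) then α ((j : ℕ) + 1)
        else if (i : ℕ) = (j : ℕ) + 1 then β ((j : ℕ) + 2) else 0)
    (hAV : A * V = U * B)
    (hPU : P * U = V * Bᵀ + c • Matrix.vecMulVec vk1
      (fun j : Fin (k+1) => if (j : ℕ) = k then (1:ℝ) else 0))
    (w : Fin k → ℝ) (hw : ∀ i : Fin k, 0 < (i:ℕ) → w i = 0) :
    ∀ j, j < k → (P*A)^j *ᵥ (V *ᵥ w) = V *ᵥ ((Bᵀ*B)^j *ᵥ w) := by
  -- last row of B
  have hrow : (fun j : Fin (k+1) => if (j : ℕ) = k then (1:ℝ) else 0) ᵥ* B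
      = β (k+1) • (fun l : Fin k => if (l:ℕ) = k - 1 then (1:ℝ) else 0) := by
    ext j
    have hj := j.isLt
    have hsum : ((fun s : Fin (k+1) => if (s:ℕ) = k then (1:ℝ) else 0) ᵥ* B) j
        = B ⟨k, by omega⟩ j := by
      simp only [Matrix.vecMul, dotProduct]
      rw [Finset.sum_eq_single (⟨k, by omega⟩ : Fin (k+1))]
      · simp
      · intro s _ hs
        have : (s:ℕ) ≠ k := fun h => hs (by ext; simpa using h)
        simp [this]
      · simp
    rw [hsum, hB]
    simp only [Pi.smul_apply, smul_eq_mul, Fin.val_mk]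
    by_cases hcase : (j:ℕ) = k - 1
    · rw [if_neg (show ¬ k = (j:ℕ) by omega), if_pos (show k = (j:ℕ)+1 by omega),
        if_pos hcase, mul_one]
      exact congrArg β (by omega)
    · rw [if_neg (show ¬ k = (j:ℕ) by omega), if_neg (show ¬ k = (j:ℕ)+1 by omega),
        if_neg hcase, mul_zero]
  have hPAV : (P*A) * V = V * (Bᵀ*B) + (c * β (k+1)) • Matrix.vecMulVec vk1
      (fun l : Fin k => if (l:ℕ) = k - 1 then (1:ℝ) else 0) := by
    calc (P*A) * V = P * (A * V) := by rw [Matrix.mul_assoc]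
      _ = (P * U) * B := by rw [hAV, Matrix.mul_assoc]
      _ = V * Bᵀ * B + c • (Matrix.vecMulVec vk1 (fun j : Fin (k+1) => if (j : ℕ) = k then (1:ℝ) else 0) * B) := by
          rw [hPU, Matrix.add_mul, Matrix.smul_mul]
      _ = _ := by
          rw [aux_vmv_mul, hrow, aux_vmv_smul, Matrix.mul_assoc, smul_smul]
  intro j
  induction j with
  | zero => intro _; simp [Matrix.one_mulVec]
  | succ j ih =>
      intro hjk
      rw [pow_succ', ← Matrix.mulVec_mulVec, ih (by omega), Matrix.mulVec_mulVec, hPAV,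
        Matrix.add_mulVec, Matrix.smul_mulVec, aux_vmv_mulVec]
      have hdot : (fun l : Fin k => if (l:ℕ) = k - 1 then (1:ℝ) else 0) ⬝ᵥ ((Bᵀ*B)^j *ᵥ w) = 0 := by
        simp only [dotProduct]
        rw [Finset.sum_eq_single (⟨k-1, by omega⟩ : Fin k)]
        · rw [aux_supp (Bᵀ*B) (fun i l h => aux_tri α β B hB h) w hw j ⟨k-1, by omega⟩ (by simp; omega)]
          simp
        · intro s _ hs
          have : (s:ℕ) ≠ k - 1 := fun h => hs (by ext; simpa using h)
          simp [this]
        · simp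
      rw [hdot, zero_smul, smul_zero, add_zero, Matrix.mulVec_mulVec, Matrix.mulVec_mulVec,
        Matrix.mul_assoc, ← pow_succ']

lemma aux_conj_pow {n : ℕ} (Z S : Matrix (Fin n) (Fin n) ℝ) (hZ : IsUnit Z.det) (j : ℕ) :
    (Z * S * Z⁻¹)^j = Z * S^j * Z⁻¹ := by
  induction j with
  | zero => simp [Matrix.mul_nonsing_inv Z hZ]
  | succ j ih =>
      rw [pow_succ, ih, pow_succ]
      calc Z * S ^ j * Z⁻¹ * (Z * S * Z⁻¹) = Z * S ^ j * (Z⁻¹ * Z) * S * Z⁻¹ := by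
            noncomm_ring
        _ = Z * (S ^ j * S) * Z⁻¹ := by rw [Matrix.nonsing_inv_mul Z hZ]; noncomm_ring

lemma aux_conj {n : ℕ} (Z S : Matrix (Fin n) (Fin n) ℝ) (hZ : IsUnit Z.det) (p : Polynomial ℝ) :
    Polynomial.aeval (Z * S * Z⁻¹) p = Z * Polynomial.aeval S p * Z⁻¹ := by
  induction p using Polynomial.induction_on' with
  | add p q hp hq => simp only [map_add, hp, hq, Matrix.mul_add, Matrix.add_mul]
  | monomial j a =>
      rw [Polynomial.aeval_monomial, Polynomial.aeval_monomial, aux_conj_pow Z S hZ]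
      simp [Algebra.algebraMap_eq_smul_one, Matrix.mul_smul, Matrix.smul_mul, Matrix.mul_assoc]

lemma aux_aeval_diag {n : ℕ} (d : Fin n → ℝ) (p : Polynomial ℝ) :
    Polynomial.aeval (Matrix.diagonal d) p = Matrix.diagonal (fun i => p.eval (d i)) := by
  induction p using Polynomial.induction_on' with
  | add p q hp hq => simp [map_add, hp, hq, Matrix.diagonal_add]
  | monomial j a =>
      rw [Polynomial.aeval_monomial, Matrix.diagonal_pow]
      simp [Matrix.algebraMap_eq_diagonal, Matrix.diagonal_mul_diagonal, Polynomial.eval_monomial]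

lemma aux_sum_mulVec {n p : ℕ} {ι : Type*} (s : Finset ι) (A : ι → Matrix (Fin n) (Fin p) ℝ)
    (v : Fin p → ℝ) : (∑ i ∈ s, A i) *ᵥ v = ∑ i ∈ s, (A i *ᵥ v) := by
  ext a
  simp only [Matrix.mulVec, dotProduct, Matrix.sum_apply, Finset.sum_apply, Finset.sum_mul]
  rw [Finset.sum_comm]

lemma aux_mulVec_sum {n p : ℕ} {ι : Type*} (s : Finset ι) (A : Matrix (Fin n) (Fin p) ℝ)
    (v : ι → Fin p → ℝ) : A *ᵥ (∑ i ∈ s, v i) = ∑ i ∈ s, (A *ᵥ v i) := by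
  ext a
  simp only [Matrix.mulVec, dotProduct, Finset.sum_apply, Finset.mul_sum]
  rw [Finset.sum_comm]

lemma aux_mulVec_eq_sum {n : ℕ} (Z : Matrix (Fin n) (Fin n) ℝ) (v : Fin n → ℝ) :
    Z *ᵥ v = ∑ i : Fin n, v i • Zᵀ i := by
  ext a
  simp [Matrix.mulVec, dotProduct, Finset.sum_apply, mul_comm]

lemma aux_sum_restrict {n r : ℕ} (hrn : r ≤ n) {Mo : Type*} [AddCommMonoid Mo] (F : Fin n → Mo)
    (hF : ∀ i : Fin n, r ≤ (i:ℕ) → F i = 0) :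
    ∑ i : Fin n, F i = ∑ i : Fin r, F (Fin.castLE hrn i) := by
  set F' : ℕ → Mo := fun j => if h : j < n then F ⟨j, h⟩ else 0 with hF'
  have h1 : ∑ i : Fin n, F i = ∑ j ∈ Finset.range n, F' j := by
    rw [← Fin.sum_univ_eq_sum_range]
    exact Finset.sum_congr rfl fun i _ => by simp [hF']
  have h2 : ∑ i : Fin r, F (Fin.castLE hrn i) = ∑ j ∈ Finset.range r, F' j := by
    rw [← Fin.sum_univ_eq_sum_range]
    refine Finset.sum_congr rfl fun i _ => ?_
    have : (i : ℕ) < n := lt_of_lt_of_le i.isLt hrn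
    simp only [hF', this, dif_pos]
    rfl
  rw [h1, h2]
  refine (Finset.sum_subset (Finset.range_subset_range.mpr hrn) fun j hj hj2 => ?_).symm
  simp only [Finset.mem_range] at hj hj2
  simp only [hF', hj, dif_pos]
  exact hF ⟨j, hj⟩ (by simpa using le_of_not_gt hj2)

/-- Under the GSVD setup and the gen-GKB matrix relations through step `k`,
if `B_kᵀ B_k` is invertible with distinct positive eigenvalues `(θ_j^{(k)})²`, then the
`k`-th subspace projection regularized solution `x_k = V_k (B_kᵀ B_k)⁻¹ B_kᵀ (β₁ e₁)`
has the filtered GSVD expansion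
`x_k = Σ_{i=1}^{r} f_i^{(k)} ((u_{A,i}ᵀ L_M b)/σ_i) z_i`,
with filter factors `f_i^{(k)} = 1 − Π_{j=1}^{k} ((θ_j^{(k)})² − γ_i²)/(θ_j^{(k)})²`
and `γ_i = σ_i`. -/
theorem genGKB_SPR_filtered_expansion {m n : ℕ} (r k : ℕ)
    (hk1 : 1 ≤ k) (hrm : r ≤ m) (hrn : r ≤ n)
    (A : Matrix (Fin m) (Fin n) ℝ) (b : Fin m → ℝ)
    (M : Matrix (Fin m) (Fin m) ℝ) (N : Matrix (Fin n) (Fin n) ℝ)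
    (hM : M.PosDef) (hN : N.PosDef)
    (LM : Matrix (Fin m) (Fin m) ℝ) (LN : Matrix (Fin n) (Fin n) ℝ)
    (hLM : IsUnit LM.det) (hLN : IsUnit LN.det)
    (hLMM : LMᵀ * LM = M⁻¹) (hLNN : LNᵀ * LN = N⁻¹)
    (UA : Matrix (Fin m) (Fin m) ℝ) (hUA : UAᵀ * UA = 1)
    (Z : Matrix (Fin n) (Fin n) ℝ) (hZ : IsUnit Z.det) (hZN : Zᵀ * N⁻¹ * Z = 1)
    (σ : ℕ → ℝ)
    (hσpos : ∀ i, i < r → 0 < σ i) (hσlt1 : ∀ i, i < r → σ i < 1)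
    (hσord : ∀ i j, i ≤ j → j < r → σ j ≤ σ i)
    (SigA : Matrix (Fin m) (Fin n) ℝ)
    (hSigA : ∀ (i : Fin m) (j : Fin n),
      SigA i j = if (i : ℕ) = (j : ℕ) ∧ (i : ℕ) < r then σ (i : ℕ) else 0)
    (hgsvd : LM * A = UA * SigA * Z⁻¹)
    -- gen-GKB data: bidiagonal B with positive α, β, bases U, V and next vector v_{k+1}
    (α β : ℕ → ℝ)
    (hαpos : ∀ i, 1 ≤ i → i ≤ k + 1 → 0 < α i)
    (hβpos : ∀ i, 1 ≤ i → i ≤ k + 1 → 0 < β i)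
    (U : Matrix (Fin m) (Fin (k + 1)) ℝ) (V : Matrix (Fin n) (Fin k) ℝ)
    (vk1 : Fin n → ℝ)
    (B : Matrix (Fin (k + 1)) (Fin k) ℝ)
    (hB : ∀ (i : Fin (k + 1)) (j : Fin k),
      B i j = if (i : ℕ) = (j : ℕ) then α ((j : ℕ) + 1)
        else if (i : ℕ) = (j : ℕ) + 1 then β ((j : ℕ) + 2) else 0)
    (e₁ : Fin (k + 1) → ℝ) (he₁ : e₁ = fun j : Fin (k + 1) => if (j : ℕ) = 0 then 1 else 0)
    (hb : β 1 • (U *ᵥ e₁) = b)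
    (hAV : A * V = U * B)
    (hNAU : N * Aᵀ * M⁻¹ * U =
      V * Bᵀ + α (k + 1) • Matrix.vecMulVec vk1
        (fun j : Fin (k + 1) => if (j : ℕ) = k then (1 : ℝ) else 0))
    (hUorth : Uᵀ * M⁻¹ * U = 1)
    (hVorth : Vᵀ * N⁻¹ * V = 1)
    (hvk1orth : ∀ j : Fin k, vk1 ⬝ᵥ (N⁻¹ *ᵥ Vᵀ j) = 0)
    -- the eigenvalues (θ_j^{(k)})² of B_kᵀ B_k, distinct and positive
    (θ : Fin k → ℝ)
    (hθpos : ∀ j : Fin k, 0 < θ j ^ 2)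
    (hθdistinct : ∀ i j : Fin k, i < j → θ j ^ 2 < θ i ^ 2)
    (hBBunit : IsUnit (Bᵀ * B).det)
    (hchar : (Bᵀ * B).charpoly = ∏ j : Fin k, (Polynomial.X - Polynomial.C (θ j ^ 2))) :
    V *ᵥ ((Bᵀ * B)⁻¹ *ᵥ (Bᵀ *ᵥ (β 1 • e₁))) =
      ∑ i : Fin r,
        ((1 - ∏ j : Fin k, ((θ j ^ 2 - σ (i : ℕ) ^ 2) / θ j ^ 2)) *
          ((UAᵀ (Fin.castLE hrm i) ⬝ᵥ (LM *ᵥ b)) / σ (i : ℕ))) •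
          Zᵀ (Fin.castLE hrn i) := by
  classical
  -- basic positivity facts
  have hθne : ∀ j : Fin k, θ j ^ 2 ≠ 0 := fun j => ne_of_gt (hθpos j)
  have hprodne : (∏ j : Fin k, θ j ^ 2) ≠ 0 :=
    Finset.prod_ne_zero_iff.mpr fun j _ => hθne j
  -- the filter polynomial f and its properties
  set c : ℝ := (∏ j : Fin k, θ j ^ 2)⁻¹ with hc
  set f : Polynomial ℝ :=
    1 - Polynomial.C c * ∏ j : Fin k, (Polynomial.C (θ j ^ 2) - Polynomial.X) with hf
  have hCH : Polynomial.aeval (Bᵀ * B)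
      (∏ j : Fin k, (Polynomial.X - Polynomial.C (θ j ^ 2))) = 0 := by
    rw [← hchar]; exact Matrix.aeval_self_charpoly (Bᵀ * B)
  have hprodzero : Polynomial.aeval (Bᵀ * B)
      (∏ j : Fin k, (Polynomial.C (θ j ^ 2) - Polynomial.X)) = 0 := by
    have hprodeq : ∏ j : Fin k, (Polynomial.C (θ j ^ 2) - Polynomial.X)
        = (-1 : Polynomial ℝ) ^ k * ∏ j : Fin k, (Polynomial.X - Polynomial.C (θ j ^ 2)) := by
      have hfac : ∀ j : Fin k, Polynomial.C (θ j ^ 2) - Polynomial.X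
          = (-1) * (Polynomial.X - Polynomial.C (θ j ^ 2)) := fun j => by ring
      rw [Finset.prod_congr rfl fun j _ => hfac j, Finset.prod_mul_distrib,
        Finset.prod_const, Finset.card_univ, Fintype.card_fin]
    rw [hprodeq, _root_.map_mul, hCH, mul_zero]
  have haevalf : Polynomial.aeval (Bᵀ * B) f = 1 := by
    rw [hf, map_sub, _root_.map_one, _root_.map_mul, hprodzero, mul_zero, sub_zero]
  have hcoeff0 : f.coeff 0 = 0 := by
    rw [Polynomial.coeff_zero_eq_eval_zero, hf]
    simp only [Polynomial.eval_sub, Polynomial.eval_one, Polynomial.eval_mul,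
      Polynomial.eval_C, Polynomial.eval_prod, Polynomial.eval_X, sub_zero]
    rw [hc, inv_mul_cancel₀ hprodne, sub_self]
  obtain ⟨ψ, hψ⟩ : Polynomial.X ∣ f := Polynomial.X_dvd_iff.mpr hcoeff0
  have hGψ : (Bᵀ * B) * Polynomial.aeval (Bᵀ * B) ψ = 1 := by
    have h := haevalf
    rw [hψ, _root_.map_mul, Polynomial.aeval_X] at h
    exact h
  have hGinv : (Bᵀ * B)⁻¹ = Polynomial.aeval (Bᵀ * B) ψ := Matrix.inv_eq_right_inv hGψ
  have hψne : ψ ≠ 0 := by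
    intro h0
    rw [h0, mul_zero] at hψ
    rw [hψ, map_zero] at haevalf
    have h00 := congrFun (congrFun haevalf ⟨0, hk1⟩) ⟨0, hk1⟩
    simp [Matrix.one_apply] at h00
  have hdegf : f.natDegree ≤ k := by
    rw [hf]
    refine le_trans (Polynomial.natDegree_sub_le _ _) (max_le (by simp) ?_)
    refine le_trans (Polynomial.natDegree_mul_le) ?_
    rw [Polynomial.natDegree_C, zero_add]
    refine le_trans (Polynomial.natDegree_prod_le _ _) ?_
    have hsum : ∑ j : Fin k, (Polynomial.C (θ j ^ 2) - Polynomial.X).natDegree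
        ≤ ∑ _j : Fin k, 1 :=
      Finset.sum_le_sum fun j _ => le_trans (Polynomial.natDegree_sub_le _ _)
        (max_le (by simp) (le_of_eq Polynomial.natDegree_X))
    simpa using hsum
  have hdegψ : ψ.natDegree < k := by
    have h1 : f.natDegree = ψ.natDegree + 1 := by
      rw [hψ, Polynomial.natDegree_mul Polynomial.X_ne_zero hψne, Polynomial.natDegree_X,
        add_comm]
    omega
  -- the starting vector w and its support
  have hw0 : ∀ i : Fin k, 0 < (i:ℕ) → (Bᵀ *ᵥ e₁) i = 0 := by
    intro i hi
    simp only [Matrix.mulVec, dotProduct, Matrix.transpose_apply, he₁]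
    apply Finset.sum_eq_zero
    intro s _
    rw [hB]
    split_ifs <;> first | (exfalso; omega) | ring
  -- Krylov correspondence
  have hKry := aux_krylov hk1 α β A (N * Aᵀ * M⁻¹) U V vk1 B (α (k+1)) hB hAV hNAU
    (Bᵀ *ᵥ e₁) hw0
  have haevalKry : Polynomial.aeval ((N * Aᵀ * M⁻¹) * A) ψ *ᵥ (V *ᵥ (Bᵀ *ᵥ e₁))
      = V *ᵥ (Polynomial.aeval (Bᵀ * B) ψ *ᵥ (Bᵀ *ᵥ e₁)) := by
    rw [Polynomial.aeval_eq_sum_range' hdegψ, Polynomial.aeval_eq_sum_range' hdegψ,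
      aux_sum_mulVec, aux_sum_mulVec, aux_mulVec_sum]
    refine Finset.sum_congr rfl fun j hj => ?_
    simp only [Matrix.smul_mulVec, Matrix.mulVec_smul]
    rw [hKry j (Finset.mem_range.mp hj)]
  have hVw : (N * Aᵀ * M⁻¹) *ᵥ (U *ᵥ e₁) = V *ᵥ (Bᵀ *ᵥ e₁) := by
    have hdot0 : (fun j : Fin (k+1) => if (j:ℕ) = k then (1:ℝ) else 0) ⬝ᵥ e₁ = 0 := by
      simp only [dotProduct, he₁]
      apply Finset.sum_eq_zero
      intro s _
      split_ifs <;> first | (exfalso; omega) | ring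
    rw [Matrix.mulVec_mulVec, hNAU, Matrix.add_mulVec, Matrix.smul_mulVec,
      aux_vmv_mulVec, hdot0, zero_smul, smul_zero, add_zero, ← Matrix.mulVec_mulVec]
  -- GSVD algebra
  have hNdet : IsUnit N.det := (Matrix.isUnit_iff_isUnit_det _).mp hN.isUnit
  have hZt : IsUnit Zᵀ.det := by rwa [Matrix.det_transpose]
  have hNinv : N⁻¹ = Zᵀ⁻¹ * Z⁻¹ := by
    calc N⁻¹ = (Zᵀ⁻¹ * Zᵀ) * N⁻¹ * (Z * Z⁻¹) := by
          rw [Matrix.nonsing_inv_mul _ hZt, Matrix.mul_nonsing_inv _ hZ, Matrix.one_mul,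
            Matrix.mul_one]
      _ = Zᵀ⁻¹ * (Zᵀ * N⁻¹ * Z) * Z⁻¹ := by simp only [Matrix.mul_assoc]
      _ = Zᵀ⁻¹ * Z⁻¹ := by rw [hZN, Matrix.mul_one]
  have hN2 : N = Z * Zᵀ := by
    calc N = (N⁻¹)⁻¹ := (Matrix.nonsing_inv_nonsing_inv N hNdet).symm
      _ = (Zᵀ⁻¹ * Z⁻¹)⁻¹ := by rw [hNinv]
      _ = Z * Zᵀ := by
          rw [Matrix.mul_inv_rev, Matrix.nonsing_inv_nonsing_inv _ hZ,
            Matrix.nonsing_inv_nonsing_inv _ hZt]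
  have hLMAZ : LM * A * Z = UA * SigA := by
    rw [hgsvd, Matrix.mul_assoc, Matrix.nonsing_inv_mul Z hZ, Matrix.mul_one]
  have hPZ : N * Aᵀ * M⁻¹ = Z * (SigAᵀ * (UAᵀ * LM)) := by
    have h3 : Zᵀ * (Aᵀ * LMᵀ) = SigAᵀ * UAᵀ := by
      have h4 := congrArg Matrix.transpose hLMAZ
      simpa [Matrix.transpose_mul, Matrix.mul_assoc] using h4
    calc N * Aᵀ * M⁻¹ = Z * Zᵀ * Aᵀ * (LMᵀ * LM) := by rw [hN2, hLMM]
      _ = Z * (Zᵀ * (Aᵀ * LMᵀ)) * LM := by simp only [Matrix.mul_assoc]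
      _ = Z * (SigAᵀ * UAᵀ) * LM := by rw [h3]
      _ = Z * (SigAᵀ * (UAᵀ * LM)) := by simp only [Matrix.mul_assoc]
  have hPA : (N * Aᵀ * M⁻¹) * A = Z * (SigAᵀ * SigA) * Z⁻¹ := by
    calc (N * Aᵀ * M⁻¹) * A = Z * (SigAᵀ * (UAᵀ * (LM * A))) := by
          rw [hPZ]; simp only [Matrix.mul_assoc]
      _ = Z * (SigAᵀ * ((UAᵀ * UA) * (SigA * Z⁻¹))) := by
          rw [hgsvd]; simp only [Matrix.mul_assoc]
      _ = Z * (SigAᵀ * SigA) * Z⁻¹ := by rw [hUA, Matrix.one_mul]; simp only [Matrix.mul_assoc]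
  have hSdiag : SigAᵀ * SigA
      = Matrix.diagonal (fun i : Fin n => if (i:ℕ) < r then σ (i:ℕ) ^ 2 else 0) := by
    ext i j
    simp only [Matrix.mul_apply, Matrix.transpose_apply, Matrix.diagonal_apply]
    by_cases hij : i = j
    · subst hij
      by_cases hir : (i:ℕ) < r
      · rw [if_pos rfl, if_pos hir,
          Finset.sum_eq_single (⟨(i:ℕ), lt_of_lt_of_le hir hrm⟩ : Fin m)]
        · simp only [hSigA, Fin.val_mk]
          rw [if_pos (show True ∧ (i:ℕ) < r from ⟨trivial, hir⟩)]
          ring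
        · intro s _ hs
          simp only [hSigA]
          have hsne : ¬((s:ℕ) = (i:ℕ)) := fun hh => hs (by
            apply Fin.ext; simpa using hh)
          rw [if_neg (show ¬((s:ℕ) = (i:ℕ) ∧ (s:ℕ) < r) from fun hcon => hsne hcon.1), zero_mul]
        · simp
      · rw [if_pos rfl, if_neg hir]
        apply Finset.sum_eq_zero
        intro s _
        simp only [hSigA]
        rw [if_neg (show ¬((s:ℕ) = (i:ℕ) ∧ (s:ℕ) < r) from fun hcon => hir (hcon.1 ▸ hcon.2)), zero_mul]
    · rw [if_neg hij]
      apply Finset.sum_eq_zero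
      intro s _
      simp only [hSigA]
      by_cases h1 : (s:ℕ) = (i:ℕ) ∧ (s:ℕ) < r
      · have h2 : ¬((s:ℕ) = (j:ℕ) ∧ (s:ℕ) < r) := by
          rintro ⟨h3, _⟩
          exact hij (Fin.ext (h1.1.symm.trans h3))
        rw [if_neg h2, mul_zero]
      · rw [if_neg h1, zero_mul]
  have hZP : Z⁻¹ * (N * Aᵀ * M⁻¹) = SigAᵀ * (UAᵀ * LM) := by
    rw [hPZ, ← Matrix.mul_assoc, Matrix.nonsing_inv_mul Z hZ, Matrix.one_mul]
  -- component formula for SigAᵀ *ᵥ y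
  set y : Fin m → ℝ := UAᵀ *ᵥ (LM *ᵥ b) with hy
  have hSy : ∀ i : Fin n, (SigAᵀ *ᵥ y) i
      = if h : (i:ℕ) < r then σ (i:ℕ) * y ⟨(i:ℕ), lt_of_lt_of_le h hrm⟩ else 0 := by
    intro i
    simp only [Matrix.mulVec, dotProduct, Matrix.transpose_apply]
    by_cases h : (i:ℕ) < r
    · rw [dif_pos h, Finset.sum_eq_single (⟨(i:ℕ), lt_of_lt_of_le h hrm⟩ : Fin m)]
      · simp only [hSigA, Fin.val_mk]
        rw [if_pos (show True ∧ (i:ℕ) < r from ⟨trivial, h⟩)]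
      · intro s _ hs
        simp only [hSigA]
        have hsne : ¬((s:ℕ) = (i:ℕ)) := fun hh => hs (by apply Fin.ext; simpa using hh)
        rw [if_neg (show ¬((s:ℕ) = (i:ℕ) ∧ (s:ℕ) < r) from fun hcon => hsne hcon.1), zero_mul]
      · simp
    · rw [dif_neg h]
      apply Finset.sum_eq_zero
      intro s _
      simp only [hSigA]
      rw [if_neg (show ¬((s:ℕ) = (i:ℕ) ∧ (s:ℕ) < r) from fun hcon => h (hcon.1 ▸ hcon.2)), zero_mul]
  -- main calculation
  set dd : Fin n → ℝ :=
    fun i => ψ.eval (if (i:ℕ) < r then σ (i:ℕ) ^ 2 else 0) with hdd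
  have hmain : V *ᵥ ((Bᵀ * B)⁻¹ *ᵥ (Bᵀ *ᵥ (β 1 • e₁)))
      = ∑ i : Fin n, ((Matrix.diagonal dd *ᵥ (SigAᵀ *ᵥ y)) i) • Zᵀ i := by
    have hb' : (N * Aᵀ * M⁻¹) *ᵥ b = β 1 • ((N * Aᵀ * M⁻¹) *ᵥ (U *ᵥ e₁)) := by
      rw [← hb, Matrix.mulVec_smul]
    calc V *ᵥ ((Bᵀ * B)⁻¹ *ᵥ (Bᵀ *ᵥ (β 1 • e₁)))
        = β 1 • (V *ᵥ (Polynomial.aeval (Bᵀ * B) ψ *ᵥ (Bᵀ *ᵥ e₁))) := by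
          rw [hGinv, Matrix.mulVec_smul, Matrix.mulVec_smul, Matrix.mulVec_smul]
      _ = β 1 • (Polynomial.aeval ((N * Aᵀ * M⁻¹) * A) ψ *ᵥ (V *ᵥ (Bᵀ *ᵥ e₁))) := by
          rw [haevalKry]
      _ = Polynomial.aeval ((N * Aᵀ * M⁻¹) * A) ψ *ᵥ ((N * Aᵀ * M⁻¹) *ᵥ b) := by
          rw [hb', hVw, Matrix.mulVec_smul]
      _ = (Z * Polynomial.aeval (SigAᵀ * SigA) ψ * Z⁻¹) *ᵥ ((N * Aᵀ * M⁻¹) *ᵥ b) := by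
          rw [hPA, aux_conj Z (SigAᵀ * SigA) hZ]
      _ = Z *ᵥ (Polynomial.aeval (SigAᵀ * SigA) ψ *ᵥ ((Z⁻¹ * (N * Aᵀ * M⁻¹)) *ᵥ b)) := by
          rw [Matrix.mulVec_mulVec, Matrix.mulVec_mulVec, Matrix.mulVec_mulVec]
          simp only [Matrix.mul_assoc]
      _ = Z *ᵥ (Matrix.diagonal dd *ᵥ (SigAᵀ *ᵥ y)) := by
          rw [hZP, hSdiag, aux_aeval_diag, hy, ← Matrix.mulVec_mulVec,
            ← Matrix.mulVec_mulVec]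
      _ = ∑ i : Fin n, ((Matrix.diagonal dd *ᵥ (SigAᵀ *ᵥ y)) i) • Zᵀ i :=
          aux_mulVec_eq_sum _ _
  rw [hmain]
  rw [aux_sum_restrict hrn (fun i => ((Matrix.diagonal dd *ᵥ (SigAᵀ *ᵥ y)) i) • Zᵀ i)
    (fun i hi => by
      show ((Matrix.diagonal dd *ᵥ (SigAᵀ *ᵥ y)) i) • Zᵀ i = 0
      rw [Matrix.mulVec_diagonal, hSy i, dif_neg (not_lt.mpr hi), mul_zero, zero_smul])]
  refine Finset.sum_congr rfl fun i _ => ?_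
  show ((Matrix.diagonal dd *ᵥ (SigAᵀ *ᵥ y)) (Fin.castLE hrn i)) • Zᵀ (Fin.castLE hrn i) = _
  have hir : ((Fin.castLE hrn i : Fin n) : ℕ) < r := by simp [i.isLt]
  have hival : ((Fin.castLE hrn i : Fin n) : ℕ) = (i : ℕ) := rfl
  rw [Matrix.mulVec_diagonal, hSy _, dif_pos hir]
  have hidx : (⟨((Fin.castLE hrn i : Fin n) : ℕ), lt_of_lt_of_le hir hrm⟩ : Fin m)
      = Fin.castLE hrm i := by apply Fin.ext; simp [hival]
  rw [hidx]
  have hyval : y (Fin.castLE hrm i) = UAᵀ (Fin.castLE hrm i) ⬝ᵥ (LM *ᵥ b) := rfl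
  congr 1
  rw [hyval, hdd]
  simp only [hival, hir, i.isLt, if_pos, ↓reduceIte]
  -- now a scalar identity
  have hσne : σ (i : ℕ) ≠ 0 := ne_of_gt (hσpos _ i.isLt)
  have hfeval : f.eval (σ (i:ℕ) ^ 2)
      = 1 - ∏ j : Fin k, ((θ j ^ 2 - σ (i:ℕ) ^ 2) / θ j ^ 2) := by
    rw [hf]
    simp only [Polynomial.eval_sub, Polynomial.eval_one, Polynomial.eval_mul,
      Polynomial.eval_C, Polynomial.eval_prod, Polynomial.eval_X]
    congr 1
    rw [Finset.prod_div_distrib, div_eq_mul_inv, mul_comm, hc]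
  have hfψeval : f.eval (σ (i:ℕ) ^ 2) = σ (i:ℕ) ^ 2 * ψ.eval (σ (i:ℕ) ^ 2) := by
    rw [hψ, Polynomial.eval_mul, Polynomial.eval_X]
  rw [← hfeval, hfψeval]
  field_simp
end
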